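/- arXiv:1307.3113 — 10 statements merged into one kernel-verified Lean document; each statement's English description precedes it below -/
import Mathlib

section
/- In a Nash equilibrium graph of the network creation game with parameter α, for any vertex v, every vertex w at distance 2 from v has at most ⌊α−1⌋ children, where a child of w is a vertex u at distance i ≥ 3 from v admitting a shortest path from u to v whose vertex at distance 2 from v is w. -/
open scoped ENNReal

section NetworkCreation

variable {V : Type*} [Fintype V] [DecidableEq V]

/-- The undirected network formed by a strategy profile `S`:
`v` and `w` are adjacent iff one of them bought the edge to the other. -/
def netGraph (S : V → Finset V) : SimpleGraph V where
  Adj v w := v ≠ w ∧ (w ∈ S v ∨ v ∈ S w)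
  symm := ⟨fun _ _ h => ⟨h.1.symm, h.2.symm⟩⟩
  loopless := ⟨fun _ h => h.1 rfl⟩

instance (S : V → Finset V) : DecidableRel (netGraph S).Adj :=
  fun v w => inferInstanceAs (Decidable (v ≠ w ∧ (w ∈ S v ∨ v ∈ S w)))

/-- Individual cost of agent `v`: `α` per bought edge, plus the sum of the
graph distances from `v` to all vertices (`⊤` if some vertex is unreachable). -/
noncomputable def netCost (α : ℝ) (S : V → Finset V) (v : V) : ℝ≥0∞ :=
  ENNReal.ofReal α * (S v).card + ∑ w, ((netGraph S).edist v w : ℝ≥0∞)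

/-- (Weak) Nash equilibrium: no agent can strictly decrease its own cost by
unilaterally switching its bought-edge set to any other set of other vertices. -/
def IsNash (α : ℝ) (S : V → Finset V) : Prop :=
  ∀ (v : V) (T : Finset V), v ∉ T →
    netCost α S v ≤ netCost α (Function.update S v T) v

/-- Total social cost of a strategy profile. -/
noncomputable def socialCost (α : ℝ) (S : V → Finset V) : ℝ≥0∞ :=
  ∑ v, netCost α S v

end NetworkCreation

-- monotonicity of netGraph under pointwise inclusion
lemma netGraph_mono {V : Type*} [Fintype V] [DecidableEq V] {S S' : V → Finset V}
    (h : ∀ x, S x ⊆ S' x) : netGraph S ≤ netGraph S' := by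
  intro x y hxy
  exact ⟨hxy.1, hxy.2.imp (fun hm => h x hm) (fun hm => h y hm)⟩

/-- In a Nash equilibrium, every vertex `w` at distance 2 from `v` has at most
`⌊α - 1⌋` children, where a child of `w` is a vertex `u` at distance `≥ 3` from `v`
admitting a shortest path to `v` whose distance-2 vertex is `w`
(equivalently, `dist w u + 2 = dist v u`). -/
theorem stmt0 {V : Type*} [Fintype V] [DecidableEq V] (α : ℝ) (hα : 0 < α)
    (S : V → Finset V) (hS : ∀ v, v ∉ S v) (hNash : IsNash α S)
    (v w : V) (hw : (netGraph S).edist v w = 2) :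
    (({u : V | 3 ≤ (netGraph S).edist v u ∧
        (netGraph S).edist w u + 2 = (netGraph S).edist v u}.ncard : ℤ))
      ≤ ⌊α - 1⌋ := by
  classical
  set G := netGraph S with hG
  have hvw : v ≠ w := by
    intro h
    rw [h, SimpleGraph.edist_self] at hw
    exact two_ne_zero hw.symm
  -- Step 1: all distances from v are finite
  have hfin : ∀ u, G.edist v u ≠ ⊤ := by
    have h0 := hNash v (Finset.univ.erase v) (Finset.notMem_erase v _)
    set S0 := Function.update S v (Finset.univ.erase v) with hS0
    have hne : netCost α S0 v ≠ ⊤ := by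
      have hle : ∀ u, ((netGraph S0).edist v u : ℝ≥0∞) ≤ 1 := by
        intro u
        by_cases huv : u = v
        · subst huv; simp [SimpleGraph.edist_self]
        · have hadj : (netGraph S0).Adj v u := by
            refine ⟨Ne.symm huv, Or.inl ?_⟩
            simp [hS0, Function.update_self, huv]
          have := SimpleGraph.edist_eq_one_iff_adj.mpr hadj
          rw [this]; simp
      rw [netCost]
      refine ENNReal.add_ne_top.mpr ⟨?_, ?_⟩
      · exact ENNReal.mul_ne_top ENNReal.ofReal_ne_top (by simp)
      · have : ∑ u, ((netGraph S0).edist v u : ℝ≥0∞) ≤ ∑ _u : V, (1 : ℝ≥0∞) :=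
          Finset.sum_le_sum fun u _ => hle u
        exact ne_top_of_le_ne_top (by simp) this
    have hcost : netCost α S v ≠ ⊤ := ne_top_of_le_ne_top hne h0
    have hsum : ∑ u, (G.edist v u : ℝ≥0∞) ≠ ⊤ := by
      rw [netCost] at hcost
      exact fun h => hcost (by rw [h, add_top])
    intro u
    have := (ENNReal.sum_ne_top).mp hsum u (Finset.mem_univ u)
    intro h
    exact this (by rw [h]; rfl)
  -- Step 2: set up the deviation strategy
  have hwSv : w ∉ S v := by
    intro hmem
    have : G.Adj v w := ⟨hvw, Or.inl hmem⟩
    rw [SimpleGraph.edist_eq_one_iff_adj.mpr this] at hw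
    norm_num at hw
  set T : Finset V := insert w (S v) with hT
  have hvT : v ∉ T := by
    simp only [hT, Finset.mem_insert]
    push_neg
    exact ⟨hvw, hS v⟩
  set S' := Function.update S v T with hS'
  set G' := netGraph S' with hG'
  have hGG' : G ≤ G' := by
    apply netGraph_mono
    intro x
    by_cases hx : x = v
    · subst hx; simp only [hS', Function.update_self, hT]
      exact Finset.subset_insert _ _
    · simp [hS', Function.update_of_ne hx]
  have hadj' : G'.Adj v w := by
    refine ⟨hvw, Or.inl ?_⟩
    simp [hS', Function.update_self, hT]
  have hd'vw : G'.edist v w = 1 := SimpleGraph.edist_eq_one_iff_adj.mpr hadj'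
  -- the children set as a finset
  set F : Finset V := Finset.univ.filter
    (fun u => 3 ≤ G.edist v u ∧ G.edist w u + 2 = G.edist v u) with hF
  have hncard : {u : V | 3 ≤ G.edist v u ∧ G.edist w u + 2 = G.edist v u}.ncard = F.card := by
    rw [← Set.ncard_coe_finset]
    congr 1
    ext u
    simp [hF]
  have hwF : w ∉ F := by
    simp only [hF, Finset.mem_filter, Finset.mem_univ, true_and, not_and]
    intro h3
    rw [hw] at h3
    norm_num at h3
  -- termwise saving
  have hterm : ∀ u, (G'.edist v u : ℝ≥0∞) + (if u ∈ insert w F then 1 else 0)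
      ≤ (G.edist v u : ℝ≥0∞) := by
    intro u
    by_cases hu : u ∈ insert w F
    · rw [if_pos hu]
      rcases Finset.mem_insert.mp hu with h | h
      · subst h
        rw [hd'vw, hw]
        norm_num
      · simp only [hF, Finset.mem_filter, Finset.mem_univ, true_and] at h
        obtain ⟨h3, heq⟩ := h
        have h1 : G'.edist v u ≤ 1 + G.edist w u := by
          calc G'.edist v u ≤ G'.edist v w + G'.edist w u := SimpleGraph.edist_triangle
            _ ≤ 1 + G.edist w u := by
                rw [hd'vw]
                exact add_le_add_right (SimpleGraph.edist_anti hGG') 1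
        have h2 : G'.edist v u + 1 ≤ G.edist v u := by
          calc G'.edist v u + 1 ≤ (1 + G.edist w u) + 1 := add_le_add_left h1 1
            _ = G.edist w u + 2 := by ring
            _ = G.edist v u := heq
        calc (G'.edist v u : ℝ≥0∞) + 1 = ((G'.edist v u + 1 : ℕ∞) : ℝ≥0∞) := by
              rw [ENat.toENNReal_add]; norm_cast
          _ ≤ (G.edist v u : ℝ≥0∞) := ENat.toENNReal_le.mpr h2
    · rw [if_neg hu, add_zero]
      exact ENat.toENNReal_le.mpr (SimpleGraph.edist_anti hGG')
  -- sum up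
  have hsum : ∑ u, (G'.edist v u : ℝ≥0∞) + ((F.card : ℝ≥0∞) + 1)
      ≤ ∑ u, (G.edist v u : ℝ≥0∞) := by
    have h1 : ∑ u, ((G'.edist v u : ℝ≥0∞) + (if u ∈ insert w F then 1 else 0))
        ≤ ∑ u, (G.edist v u : ℝ≥0∞) := Finset.sum_le_sum fun u _ => hterm u
    rw [Finset.sum_add_distrib] at h1
    have h2 : ∑ u : V, (if u ∈ insert w F then (1:ℝ≥0∞) else 0)
        = ((insert w F).card : ℝ≥0∞) := by
      rw [Finset.sum_ite_mem, Finset.univ_inter, Finset.card_eq_sum_ones]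
      push_cast
      rfl
    rw [h2, Finset.card_insert_of_notMem hwF] at h1
    calc ∑ u, (G'.edist v u : ℝ≥0∞) + ((F.card : ℝ≥0∞) + 1)
        = ∑ u, (G'.edist v u : ℝ≥0∞) + ((F.card + 1 : ℕ) : ℝ≥0∞) := by push_cast; ring
      _ ≤ ∑ u, (G.edist v u : ℝ≥0∞) := h1
  -- Nash inequality
  have hnash := hNash v T hvT
  rw [netCost, netCost] at hnash
  rw [show (Function.update S v T) v = T from Function.update_self v T S] at hnash
  have hcardT : (T.card : ℝ≥0∞) = (S v).card + 1 := by
    rw [hT, Finset.card_insert_of_notMem hwSv]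
    push_cast; ring
  rw [hcardT, mul_add, mul_one] at hnash
  -- combine: A + sumG ≤ A + α + sumG'  and  sumG' + (|F|+1) ≤ sumG
  set A : ℝ≥0∞ := ENNReal.ofReal α * (S v).card with hA
  have hkey : A + (∑ u, (G'.edist v u : ℝ≥0∞) + ((F.card : ℝ≥0∞) + 1))
      ≤ A + ENNReal.ofReal α + ∑ u, (G'.edist v u : ℝ≥0∞) :=
    le_trans (add_le_add_right hsum A) (by rw [add_assoc] at hnash ⊢; exact hnash)
  have hsumG'ne : ∑ u, (G'.edist v u : ℝ≥0∞) ≠ ⊤ := by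
    have hsumGne : ∑ u, (G.edist v u : ℝ≥0∞) ≠ ⊤ := by
      refine ENNReal.sum_ne_top.mpr fun u _ => ?_
      intro h
      rw [← ENat.toENNReal_top] at h
      exact hfin u (ENat.toENNReal_inj.mp h)
    refine ne_top_of_le_ne_top hsumGne (Finset.sum_le_sum fun u _ => ?_)
    exact ENat.toENNReal_le.mpr (SimpleGraph.edist_anti hGG')
  have hAne : A ≠ ⊤ := ENNReal.mul_ne_top ENNReal.ofReal_ne_top (by simp)
  have hfinal : (F.card : ℝ≥0∞) + 1 ≤ ENNReal.ofReal α := by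
    have h1 : A + (∑ u, (G'.edist v u : ℝ≥0∞) + ((F.card : ℝ≥0∞) + 1))
        = (A + ∑ u, (G'.edist v u : ℝ≥0∞)) + ((F.card : ℝ≥0∞) + 1) := by ring
    have h2 : A + ENNReal.ofReal α + ∑ u, (G'.edist v u : ℝ≥0∞)
        = (A + ∑ u, (G'.edist v u : ℝ≥0∞)) + ENNReal.ofReal α := by ring
    rw [h1, h2] at hkey
    exact ENNReal.le_of_add_le_add_left (ENNReal.add_ne_top.mpr ⟨hAne, hsumG'ne⟩) hkey
  -- back to reals
  have hreal : (F.card : ℝ) + 1 ≤ α := by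
    have := hfinal
    rw [show ((F.card : ℝ≥0∞) + 1) = ENNReal.ofReal ((F.card : ℝ) + 1) by
      rw [ENNReal.ofReal_add (by positivity) zero_le_one]
      simp [ENNReal.ofReal_natCast]] at this
    exact (ENNReal.ofReal_le_ofReal_iff hα.le).mp this
  rw [hncard]
  rw [Int.le_floor]
  push_cast
  linarith
end

section
/- In a connected Nash equilibrium graph of the network creation game on n vertices with parameter α > 1, for every vertex v, if N_1 and N_2 denote the sets of vertices at distance exactly 1 and 2 from v, then |N_1| + α·|N_2| + 1 ≥ n. -/
open scoped ENNReal

lemma walk_getVert_edist {V : Type*} {G : SimpleGraph V} {a b : V} (p : G.Walk a b) (m : ℕ) :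
    G.edist a (p.getVert m) ≤ m ∧ G.edist (p.getVert m) b ≤ ((p.length - m : ℕ) : ℕ∞) := by
  induction p generalizing m with
  | nil => simp [SimpleGraph.Walk.getVert]
  | @cons u x c h q ih =>
    cases m with
    | zero =>
      refine ⟨by simp, ?_⟩
      simpa using SimpleGraph.edist_le (q.cons h)
    | succ m =>
      rw [SimpleGraph.Walk.getVert_cons_succ]
      refine ⟨?_, ?_⟩
      · calc G.edist u (q.getVert m) ≤ G.edist u x + G.edist x (q.getVert m) :=
              SimpleGraph.edist_triangle
          _ ≤ 1 + (m : ℕ∞) := add_le_add (by simpa using SimpleGraph.edist_le h.toWalk) (ih m).1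
          _ = ((m + 1 : ℕ) : ℕ∞) := by push_cast; ring
      · have h2 := (ih m).2
        simpa [SimpleGraph.Walk.length_cons, Nat.succ_sub_succ] using h2

lemma exists_mid {V : Type*} {G : SimpleGraph V} {v w : V} (h3 : 3 ≤ G.edist v w)
    (hne : G.edist v w ≠ ⊤) :
    ∃ u, G.edist v u = 2 ∧ G.edist u w + 2 ≤ G.edist v w := by
  obtain ⟨p, hp⟩ := SimpleGraph.exists_walk_of_edist_ne_top hne
  set k := p.length with hkdef
  have hk : G.edist v w = (k : ℕ∞) := hp.symm
  have hk3 : 3 ≤ k := by rw [hk] at h3; exact_mod_cast h3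
  obtain ⟨h1, h2⟩ := walk_getVert_edist p 2
  refine ⟨p.getVert 2, ?_, ?_⟩
  · have h1' : G.edist v (p.getVert 2) ≤ ((2 : ℕ) : ℕ∞) := by exact_mod_cast h1
    obtain ⟨a, ha, ha2⟩ := ENat.le_coe_iff.mp h1'
    have htr : (k : ℕ∞) ≤ ((a + (k - 2) : ℕ) : ℕ∞) := by
      calc (k : ℕ∞) = G.edist v w := hk.symm
        _ ≤ G.edist v (p.getVert 2) + G.edist (p.getVert 2) w := SimpleGraph.edist_triangle
        _ ≤ (a : ℕ∞) + ((k - 2 : ℕ) : ℕ∞) := add_le_add (le_of_eq ha) h2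
        _ = _ := by push_cast; ring
    have hle : k ≤ a + (k - 2) := by exact_mod_cast htr
    have ha3 : a = 2 := by omega
    rw [ha, ha3]; norm_cast
  · calc G.edist (p.getVert 2) w + 2 ≤ ((k - 2 : ℕ) : ℕ∞) + 2 := add_le_add_left h2 _
      _ = (k : ℕ∞) := by
          rw [(by norm_cast : ((2 : ℕ∞)) = ((2 : ℕ) : ℕ∞)), ← Nat.cast_add]
          congr 1; omega
      _ = G.edist v w := hk.symm

lemma key_bound {V : Type*} [Fintype V] [DecidableEq V] {α : ℝ} (hα : 0 ≤ α)
    {S : V → Finset V} (hS : ∀ v, v ∉ S v) (hNash : IsNash α S)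
    (hconn : (netGraph S).Connected) (v u : V) (hu : (netGraph S).edist v u = 2)
    (A : Finset V)
    (hA : ∀ w ∈ A, (netGraph S).edist u w + 2 ≤ (netGraph S).edist v w) :
    (A.card : ℝ) ≤ α := by
  classical
  set G := netGraph S with hG
  have hvu : v ≠ u := by
    intro h; rw [h, SimpleGraph.edist_self] at hu; norm_num at hu
  have huSv : u ∉ S v := by
    intro h
    have hadj : G.Adj v u := (⟨hvu, Or.inl h⟩ : v ≠ u ∧ (u ∈ S v ∨ v ∈ S u))
    rw [SimpleGraph.edist_eq_one_iff_adj.mpr hadj] at hu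
    norm_num at hu
  set T := insert u (S v) with hT
  have hvT : v ∉ T := by simp [hT, hvu, hS v]
  have hnash := hNash v T hvT
  set S' := Function.update S v T with hS'
  set G' := netGraph S' with hG'
  have hSx : ∀ x, S x ⊆ S' x := by
    intro x
    by_cases hx : x = v
    · subst hx; rw [hS', Function.update_self, hT]; exact Finset.subset_insert _ _
    · rw [hS', Function.update_of_ne hx]
  have hle : G ≤ G' := by
    intro a b hab
    exact (⟨hab.1, hab.2.imp (fun h => hSx a h) (fun h => hSx b h)⟩ : a ≠ b ∧ (b ∈ S' a ∨ a ∈ S' b))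
  have hadj' : G'.Adj v u :=
    (⟨hvu, Or.inl (by rw [hS', Function.update_self, hT]; exact Finset.mem_insert_self _ _)⟩ : v ≠ u ∧ (u ∈ S' v ∨ v ∈ S' u))
  have hu1 : G'.edist v u ≤ 1 := by simpa using SimpleGraph.edist_le hadj'.toWalk
  have hpt : ∀ w, (G'.edist v w : ℝ≥0∞) + (if w ∈ A then 1 else 0) ≤ (G.edist v w : ℝ≥0∞) := by
    intro w
    by_cases hw : w ∈ A
    · have h1 : G'.edist v w + 1 ≤ G.edist v w := by
        calc G'.edist v w + 1 ≤ (G'.edist v u + G'.edist u w) + 1 :=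
              add_le_add_left SimpleGraph.edist_triangle _
          _ ≤ (1 + G.edist u w) + 1 :=
              add_le_add_left (add_le_add hu1 (SimpleGraph.edist_anti hle)) _
          _ = G.edist u w + 2 := by ring
          _ ≤ G.edist v w := hA w hw
      simp only [hw, if_pos]
      calc (G'.edist v w : ℝ≥0∞) + 1 = ((G'.edist v w + 1 : ℕ∞) : ℝ≥0∞) := by push_cast; ring
        _ ≤ _ := ENat.toENNReal_le.mpr h1
    · simpa [hw] using ENat.toENNReal_le.mpr (SimpleGraph.edist_anti (u := v) (v := w) hle)
  have hfin : ∀ w, G.edist v w ≠ ⊤ := fun w =>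
    (SimpleGraph.edist_ne_top_iff_reachable).mpr (hconn v w)
  have hsumfin : (∑ w, (G.edist v w : ℝ≥0∞)) ≠ ⊤ := by
    refine (ENNReal.sum_lt_top.mpr fun w _ => ?_).ne
    rw [← ENat.toENNReal_top, ENat.toENNReal_lt]; exact lt_top_iff_ne_top.mpr (hfin w)
  have hsum : (∑ w, (G'.edist v w : ℝ≥0∞)) + A.card ≤ ∑ w, (G.edist v w : ℝ≥0∞) := by
    have hcardsum : (A.card : ℝ≥0∞) = ∑ w : V, (if w ∈ A then (1 : ℝ≥0∞) else 0) := by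
      rw [Finset.sum_ite_mem, Finset.univ_inter, Finset.sum_const, nsmul_eq_mul, mul_one]
    rw [hcardsum, ← Finset.sum_add_distrib]
    exact Finset.sum_le_sum fun w _ => hpt w
  have hsumle : (∑ w, (G'.edist v w : ℝ≥0∞)) ≤ ∑ w, (G.edist v w : ℝ≥0∞) :=
    Finset.sum_le_sum fun w _ => ENat.toENNReal_le.mpr (SimpleGraph.edist_anti hle)
  have hsumfin' : (∑ w, (G'.edist v w : ℝ≥0∞)) ≠ ⊤ := ne_top_of_le_ne_top hsumfin hsumle
  have hcardT : (T.card : ℝ≥0∞) = (S v).card + 1 := by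
    rw [Finset.card_insert_of_notMem huSv]; push_cast; ring
  rw [netCost, netCost, ← hG'] at hnash
  have hSv' : S' v = T := by rw [hS']; exact Function.update_self v T S
  rw [hSv', hcardT, mul_add, mul_one] at hnash
  have hc : (ENNReal.ofReal α * (S v).card) ≠ ⊤ :=
    ENNReal.mul_ne_top ENNReal.ofReal_ne_top (ENNReal.natCast_ne_top _)
  have h2 : ∑ w, (G.edist v w : ℝ≥0∞) ≤ ENNReal.ofReal α + ∑ w, (G'.edist v w : ℝ≥0∞) := by
    have h := hnash
    rw [add_assoc] at h
    exact (ENNReal.add_le_add_iff_left hc).mp h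
  have h3 : (A.card : ℝ≥0∞) ≤ ENNReal.ofReal α := by
    have h4 : (∑ w, (G'.edist v w : ℝ≥0∞)) + A.card ≤
        (∑ w, (G'.edist v w : ℝ≥0∞)) + ENNReal.ofReal α := by
      calc (∑ w, (G'.edist v w : ℝ≥0∞)) + A.card ≤ ∑ w, (G.edist v w : ℝ≥0∞) := hsum
        _ ≤ ENNReal.ofReal α + ∑ w, (G'.edist v w : ℝ≥0∞) := h2
        _ = _ := add_comm _ _
    exact (ENNReal.add_le_add_iff_left hsumfin').mp h4
  rw [← ENNReal.ofReal_natCast] at h3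
  exact (ENNReal.ofReal_le_ofReal_iff hα).mp h3

/-- In a connected Nash equilibrium on `n` vertices with `α > 1`, for every vertex
`v` we have `|N₁| + α|N₂| + 1 ≥ n`, where `Nᵢ` is the set of vertices at distance
exactly `i` from `v`. -/
theorem stmt1 {V : Type*} [Fintype V] [DecidableEq V] (α : ℝ) (hα : 1 < α)
    (S : V → Finset V) (hS : ∀ v, v ∉ S v) (hNash : IsNash α S)
    (hconn : (netGraph S).Connected) (v : V) :
    (Fintype.card V : ℝ) ≤
      ({w : V | (netGraph S).edist v w = 1}.ncard : ℝ)
      + α * ({w : V | (netGraph S).edist v w = 2}.ncard : ℝ) + 1 := by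
  classical
  set G := netGraph S with hG
  have hfin : ∀ w, G.edist v w ≠ ⊤ := fun w =>
    (SimpleGraph.edist_ne_top_iff_reachable).mpr (hconn v w)
  have hstep : ∀ w : V, ∃ u, 3 ≤ G.edist v w →
      (G.edist v u = 2 ∧ G.edist u w + 2 ≤ G.edist v w) := by
    intro w
    by_cases h3 : 3 ≤ G.edist v w
    · obtain ⟨u, hu⟩ := exists_mid h3 (hfin w)
      exact ⟨u, fun _ => hu⟩
    · exact ⟨v, fun h => absurd h h3⟩
  choose f hf using hstep
  set N1 := Finset.univ.filter (fun w => G.edist v w = 1) with hN1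
  set N2 := Finset.univ.filter (fun w => G.edist v w = 2) with hN2
  set F := Finset.univ.filter (fun w => 3 ≤ G.edist v w) with hF
  have hset1 : {w : V | G.edist v w = 1} = ↑N1 := by ext w; simp [hN1]
  have hset2 : {w : V | G.edist v w = 2} = ↑N2 := by ext w; simp [hN2]
  rw [hset1, hset2, Set.ncard_coe_finset, Set.ncard_coe_finset]
  -- counting: univ = {v} ∪ N1 ∪ N2 ∪ F, disjointly
  have hvmem : v ∉ N1 ∪ N2 ∪ F := by
    simp [hN1, hN2, hF, SimpleGraph.edist_self]
  have hcover : (Finset.univ : Finset V) = insert v (N1 ∪ N2 ∪ F) := by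
    ext w
    simp only [Finset.mem_univ, true_iff, Finset.mem_insert, Finset.mem_union,
      hN1, hN2, hF, Finset.mem_filter, true_and]
    rcases eq_or_ne w v with rfl | hne
    · exact Or.inl rfl
    · right
      obtain ⟨k, hk⟩ : ∃ k : ℕ, G.edist v w = (k : ℕ∞) := by
        cases hK : G.edist v w with
        | top => exact absurd hK (hfin w)
        | coe k => exact ⟨k, rfl⟩
      have hk0 : k ≠ 0 := by
        intro h
        rw [h] at hk
        exact hne ((SimpleGraph.edist_eq_zero_iff.mp (by exact_mod_cast hk)).symm)
      have hcases : k = 1 ∨ k = 2 ∨ 3 ≤ k := by omega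
      rcases hcases with h | h | h
      · exact Or.inl (Or.inl (by rw [hk, h]; norm_cast))
      · exact Or.inl (Or.inr (by rw [hk, h]; norm_cast))
      · exact Or.inr (by rw [hk]; exact_mod_cast h)
  have hd12 : Disjoint N1 N2 := by
    rw [Finset.disjoint_left]
    intro w h1 h2
    rw [hN1, Finset.mem_filter] at h1
    rw [hN2, Finset.mem_filter] at h2
    rw [h1.2] at h2
    norm_num at h2
  have hd12F : Disjoint (N1 ∪ N2) F := by
    rw [Finset.disjoint_left]
    intro w h1 h2
    rw [hF, Finset.mem_filter] at h2
    rcases Finset.mem_union.mp h1 with h | h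
    · rw [hN1, Finset.mem_filter] at h
      rw [h.2] at h2
      exact absurd h2.2 (by norm_num)
    · rw [hN2, Finset.mem_filter] at h
      rw [h.2] at h2
      exact absurd h2.2 (by norm_num)
  have hcard : Fintype.card V = N1.card + N2.card + F.card + 1 := by
    rw [← Finset.card_univ, hcover, Finset.card_insert_of_notMem hvmem,
      Finset.card_union_of_disjoint hd12F, Finset.card_union_of_disjoint hd12]
  -- bound each fiber
  have hub : ∀ u ∈ N2, ((F.filter (fun w => f w = u)).card : ℝ) + 1 ≤ α := by
    intro u hu
    have hu2 : G.edist v u = 2 := (Finset.mem_filter.mp hu).2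
    have hunot : u ∉ F.filter (fun w => f w = u) := by
      intro h
      have h3 : 3 ≤ G.edist v u := (Finset.mem_filter.mp (Finset.mem_of_mem_filter u h)).2
      rw [hu2] at h3
      norm_num at h3
    have hAcond : ∀ w ∈ insert u (F.filter (fun w => f w = u)),
        G.edist u w + 2 ≤ G.edist v w := by
      intro w hw
      rcases Finset.mem_insert.mp hw with rfl | hw
      · rw [SimpleGraph.edist_self, zero_add, hu2]
      · obtain ⟨hwF, hwf⟩ := Finset.mem_filter.mp hw
        have h3 : 3 ≤ G.edist v w := (Finset.mem_filter.mp hwF).2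
        have := (hf w h3).2
        rwa [hwf] at this
    have hkey := key_bound (by linarith) hS hNash hconn v u hu2 _ hAcond
    rw [Finset.card_insert_of_notMem hunot] at hkey
    push_cast at hkey
    linarith
  have hFsub : F ⊆ N2.biUnion (fun u => F.filter (fun w => f w = u)) := by
    intro w hw
    have h3 : 3 ≤ G.edist v w := (Finset.mem_filter.mp hw).2
    refine Finset.mem_biUnion.mpr ⟨f w, ?_, ?_⟩
    · rw [hN2, Finset.mem_filter]
      exact ⟨Finset.mem_univ _, (hf w h3).1⟩
    · exact Finset.mem_filter.mpr ⟨hw, rfl⟩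
  have hFle : (F.card : ℝ) + (N2.card : ℝ) ≤ α * N2.card := by
    have h1 : (F.card : ℕ) ≤ ∑ u ∈ N2, (F.filter (fun w => f w = u)).card :=
      le_trans (Finset.card_le_card hFsub) Finset.card_biUnion_le
    have h1' : (F.card : ℝ) ≤ ∑ u ∈ N2, ((F.filter (fun w => f w = u)).card : ℝ) := by
      exact_mod_cast h1
    have h2 : (∑ u ∈ N2, (((F.filter (fun w => f w = u)).card : ℝ) + 1)) ≤
        ∑ _u ∈ N2, α := Finset.sum_le_sum hub
    rw [Finset.sum_add_distrib, Finset.sum_const, Finset.sum_const, nsmul_eq_mul,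
      nsmul_eq_mul, mul_one] at h2
    linarith
  have hcard' : (Fintype.card V : ℝ) = N1.card + N2.card + F.card + 1 := by
    rw [hcard]; push_cast; ring
  rw [hcard']
  linarith
end

section
/- In a connected Nash equilibrium graph of the network creation game with parameter α, if a vertex x has degree at least α, then every vertex of the graph is at distance at most 3 from x. -/
open scoped ENNReal

/-- In a connected Nash equilibrium, any vertex `x` of degree at least `α` is
within distance 3 of every vertex. -/
theorem stmt2 {V : Type*} [Fintype V] [DecidableEq V] (α : ℝ) (hα : 0 < α)
    (S : V → Finset V) (hS : ∀ v, v ∉ S v) (hNash : IsNash α S)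
    (hconn : (netGraph S).Connected) (x : V)
    (hdeg : α ≤ ((netGraph S).degree x : ℝ)) :
    ∀ w : V, (netGraph S).dist x w ≤ 3 := by
  intro w
  by_contra hlt
  push_neg at hlt
  set G := netGraph S with hGdef
  have h4 : (4 : ℕ∞) ≤ G.edist x w := by
    calc (4 : ℕ∞) ≤ (G.dist x w : ℕ∞) := by exact_mod_cast hlt
    _ = ((G.edist x w).toNat : ℕ∞) := rfl
    _ ≤ G.edist x w := ENat.coe_toNat_le_self _
  have hwx : w ≠ x := by
    rintro rfl
    simp [SimpleGraph.dist_self] at hlt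
  have hnotadj : ¬ G.Adj x w := by
    intro h
    have := SimpleGraph.edist_eq_one_iff_adj.mpr h
    rw [this] at h4
    exact absurd h4 (by decide)
  have hxSw : x ∉ S w := fun h => hnotadj ⟨hwx.symm, Or.inr h⟩
  set T : Finset V := insert x (S w) with hTdef
  have hwT : w ∉ T := by
    simp only [hTdef, Finset.mem_insert]
    push_neg
    exact ⟨hwx, hS w⟩
  set S' := Function.update S w T with hS'def
  set G' := netGraph S' with hG'def
  have hS'w : S' w = T := Function.update_self _ _ _
  have hle : G ≤ G' := by
    intro a b hab
    refine ⟨hab.1, ?_⟩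
    rcases hab.2 with h | h
    · left
      rcases eq_or_ne a w with rfl | ha
      · rw [hS'w]; exact Finset.mem_insert_of_mem h
      · rwa [hS'def, Function.update_of_ne ha]
    · right
      rcases eq_or_ne b w with rfl | hb
      · rw [hS'w]; exact Finset.mem_insert_of_mem h
      · rwa [hS'def, Function.update_of_ne hb]
  have hadj' : G'.Adj w x := ⟨hwx, Or.inl (by rw [hS'w]; exact Finset.mem_insert_self _ _)⟩
  -- distance functions in ℝ≥0∞
  set f : V → ℝ≥0∞ := fun v => (G'.edist w v : ℝ≥0∞) with hfdef
  set g : V → ℝ≥0∞ := fun v => (G.edist w v : ℝ≥0∞) with hgdef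
  have hfg : ∀ v, f v ≤ g v := fun v =>
    ENat.toENNReal_le.mpr (SimpleGraph.edist_anti hle)
  have hgne : ∀ v, g v ≠ ⊤ := by
    intro v
    have : G.edist w v ≠ ⊤ := SimpleGraph.edist_ne_top_iff_reachable.mpr (hconn w v)
    simpa [hgdef, ← ENat.toENNReal_top] using (by exact_mod_cast this : (G.edist w v : ℝ≥0∞) ≠ ((⊤:ℕ∞):ℝ≥0∞))
  have hfx : f x ≤ 1 := by
    have : G'.edist w x = 1 := SimpleGraph.edist_eq_one_iff_adj.mpr hadj'
    simp [hfdef, this]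
  have hgx : (4 : ℝ≥0∞) ≤ g x := by
    have h4' : (4:ℕ∞) ≤ G.edist w x := SimpleGraph.edist_comm (G := G) (u := x) (v := w) ▸ h4
    calc (4:ℝ≥0∞) = ((4:ℕ∞):ℝ≥0∞) := by norm_cast
    _ ≤ g x := ENat.toENNReal_le.mpr h4'
  set A := G.neighborFinset x with hAdef
  have hxA : x ∉ A := by simp [hAdef]
  have hfy : ∀ y ∈ A, f y ≤ 2 := by
    intro y hy
    have hyx : G'.Adj x y := hle ((SimpleGraph.mem_neighborFinset _ _ _).mp hy)
    have h1 : G'.edist x y = 1 := SimpleGraph.edist_eq_one_iff_adj.mpr hyx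
    have := SimpleGraph.edist_triangle (G := G') (u := w) (v := x) (w := y)
    have h2 : G'.edist w y ≤ 2 := by
      refine this.trans ?_
      rw [SimpleGraph.edist_eq_one_iff_adj.mpr hadj', h1]
      decide
    calc f y ≤ ((2:ℕ∞) : ℝ≥0∞) := ENat.toENNReal_le.mpr h2
    _ = 2 := by norm_cast
  have hgy : ∀ y ∈ A, (3 : ℝ≥0∞) ≤ g y := by
    intro y hy
    have hyx : G.Adj y x := ((SimpleGraph.mem_neighborFinset _ _ _).mp hy).symm
    have h1 : G.edist y x = 1 := SimpleGraph.edist_eq_one_iff_adj.mpr hyx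
    have htri : G.edist w x ≤ G.edist w y + 1 := by
      have := SimpleGraph.edist_triangle (G := G) (u := w) (v := y) (w := x)
      rwa [h1] at this
    have h4' : (4 : ℕ∞) ≤ G.edist w y + 1 :=
      le_trans (SimpleGraph.edist_comm (G := G) (u := x) (v := w) ▸ h4) htri
    have h4'' : (4 : ℝ≥0∞) ≤ g y + 1 := by
      calc (4:ℝ≥0∞) = ((4:ℕ∞):ℝ≥0∞) := by norm_cast
      _ ≤ ((G.edist w y + 1 : ℕ∞) : ℝ≥0∞) := ENat.toENNReal_le.mpr h4'
      _ = g y + 1 := by push_cast; rfl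
    have : (3 : ℝ≥0∞) + 1 ≤ g y + 1 := by
      calc (3:ℝ≥0∞) + 1 = 4 := by norm_num
      _ ≤ g y + 1 := h4''
    exact (ENNReal.add_le_add_iff_right ENNReal.one_ne_top).mp this
  -- sum inequality
  have hsub : insert x A ⊆ Finset.univ := Finset.subset_univ _
  have hkey : ∑ v, f v + (3 + (A.card : ℝ≥0∞)) ≤ ∑ v, g v := by
    rw [← Finset.sum_sdiff hsub (f := f), ← Finset.sum_sdiff hsub (f := g)]
    have h1 : ∑ v ∈ Finset.univ \ insert x A, f v ≤ ∑ v ∈ Finset.univ \ insert x A, g v :=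
      Finset.sum_le_sum fun v _ => hfg v
    have h2 : ∑ v ∈ insert x A, f v + (3 + (A.card : ℝ≥0∞)) ≤ ∑ v ∈ insert x A, g v := by
      rw [Finset.sum_insert hxA, Finset.sum_insert hxA]
      have hA : ∑ y ∈ A, f y + (A.card : ℝ≥0∞) ≤ ∑ y ∈ A, g y := by
        calc ∑ y ∈ A, f y + (A.card : ℝ≥0∞) = ∑ y ∈ A, (f y + 1) := by
              rw [Finset.sum_add_distrib, Finset.sum_const, nsmul_eq_mul, mul_one]
        _ ≤ ∑ y ∈ A, g y := Finset.sum_le_sum fun y hy => by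
              calc f y + 1 ≤ 2 + 1 := add_le_add (hfy y hy) le_rfl
              _ = 3 := by norm_num
              _ ≤ g y := hgy y hy
      calc f x + ∑ y ∈ A, f y + (3 + (A.card : ℝ≥0∞))
          = (f x + 3) + (∑ y ∈ A, f y + (A.card : ℝ≥0∞)) := by ring
        _ ≤ 4 + ∑ y ∈ A, g y := by
            refine add_le_add ?_ hA
            calc f x + 3 ≤ 1 + 3 := add_le_add hfx le_rfl
            _ = 4 := by norm_num
        _ ≤ g x + ∑ y ∈ A, g y := add_le_add hgx le_rfl
    calc ∑ v ∈ Finset.univ \ insert x A, f v + ∑ v ∈ insert x A, f v + (3 + (A.card : ℝ≥0∞))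
        = ∑ v ∈ Finset.univ \ insert x A, f v + (∑ v ∈ insert x A, f v + (3 + (A.card : ℝ≥0∞))) := by
          ring
      _ ≤ ∑ v ∈ Finset.univ \ insert x A, g v + ∑ v ∈ insert x A, g v := add_le_add h1 h2
  -- Nash inequality
  have hnash := hNash w T hwT
  have hcard : (T.card : ℝ≥0∞) = (S w).card + 1 := by
    rw [hTdef, Finset.card_insert_of_notMem hxSw]; push_cast; ring
  rw [netCost, netCost, Function.update_self] at hnash
  change ENNReal.ofReal α * ((S w).card : ℝ≥0∞) + ∑ v, g v ≤
    ENNReal.ofReal α * (T.card : ℝ≥0∞) + ∑ v, f v at hnash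
  rw [hcard] at hnash
  have hsumf_ne : ∑ v, f v ≠ ⊤ := by
    refine ne_top_of_le_ne_top ?_ (Finset.sum_le_sum fun v _ => hfg v)
    exact (ENNReal.sum_lt_top.mpr fun v _ => lt_top_iff_ne_top.mpr (hgne v)).ne
  have hαne : ENNReal.ofReal α * ((S w).card : ℝ≥0∞) ≠ ⊤ :=
    ENNReal.mul_ne_top ENNReal.ofReal_ne_top (ENNReal.natCast_ne_top _)
  have hnash' : ∑ v, g v ≤ ENNReal.ofReal α + ∑ v, f v := by
    have : ENNReal.ofReal α * ((S w).card : ℝ≥0∞) + ∑ v, g v ≤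
        ENNReal.ofReal α * ((S w).card : ℝ≥0∞) + (ENNReal.ofReal α + ∑ v, f v) := by
      calc ENNReal.ofReal α * ((S w).card : ℝ≥0∞) + ∑ v, g v ≤
          ENNReal.ofReal α * (((S w).card : ℝ≥0∞) + 1) + ∑ v, f v := hnash
        _ = ENNReal.ofReal α * ((S w).card : ℝ≥0∞) + (ENNReal.ofReal α + ∑ v, f v) := by ring
    exact (ENNReal.add_le_add_iff_left hαne).mp this
  have hfinal : (3 : ℝ≥0∞) + (A.card : ℝ≥0∞) ≤ ENNReal.ofReal α := by
    have : ∑ v, f v + (3 + (A.card : ℝ≥0∞)) ≤ ∑ v, f v + ENNReal.ofReal α := by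
      calc ∑ v, f v + (3 + (A.card : ℝ≥0∞)) ≤ ∑ v, g v := hkey
      _ ≤ ENNReal.ofReal α + ∑ v, f v := hnash'
      _ = ∑ v, f v + ENNReal.ofReal α := by ring
    exact (ENNReal.add_le_add_iff_left hsumf_ne).mp this
  have hdeg' : ENNReal.ofReal α ≤ (A.card : ℝ≥0∞) := by
    have : A.card = G.degree x := rfl
    rw [this]
    calc ENNReal.ofReal α ≤ ENNReal.ofReal (G.degree x : ℝ) := ENNReal.ofReal_le_ofReal hdeg
    _ = ((G.degree x : ℕ) : ℝ≥0∞) := ENNReal.ofReal_natCast _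
  have : (3 : ℝ≥0∞) + (A.card : ℝ≥0∞) ≤ 0 + (A.card : ℝ≥0∞) := by
    calc (3 : ℝ≥0∞) + (A.card : ℝ≥0∞) ≤ (A.card : ℝ≥0∞) := hfinal.trans hdeg'
    _ = 0 + (A.card : ℝ≥0∞) := by ring
  have h30 : (3 : ℝ≥0∞) ≤ 0 :=
    (ENNReal.add_le_add_iff_right (ENNReal.natCast_ne_top _)).mp this
  simp at h30
end

section
/- In a connected Nash equilibrium graph of the network creation game on n vertices with parameter α > 1, if n > α³, then the graph has diameter at most 4. -/
open scoped ENNReal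

section AuxNetworkCreation
set_option linter.unusedSectionVars false
open SimpleGraph

variable {V : Type*} [Fintype V] [DecidableEq V]

lemma edist_cast' {G : SimpleGraph V} {u v : V} (h : G.Reachable u v) :
    (G.edist u v : ℝ≥0∞) = (G.dist u v : ℝ≥0∞) := by
  have ht : G.edist u v ≠ ⊤ := edist_ne_top_iff_reachable.mpr h
  have : G.dist u v = (G.edist u v).toNat := rfl
  rw [this]
  conv_lhs => rw [← ENat.coe_toNat ht]
  exact ENat.toENNReal_coe _

lemma exists_pred {G : SimpleGraph V} {v x : V} (h : G.Reachable v x) {d : ℕ}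
    (hd : G.dist v x = d + 1) :
    ∃ y, G.Adj y x ∧ G.dist v y = d := by
  obtain ⟨p, hp⟩ := h.exists_walk_length_eq_dist
  set q := p.reverse with hqdef
  have hql : q.length = d + 1 := by
    rw [hqdef, SimpleGraph.Walk.length_reverse, hp, hd]
  clear_value q
  cases q with
  | nil => simp at hql
  | @cons _ y _ hadj q' =>
    have hq'l : q'.length = d := by simpa using hql
    have hdy_le : G.dist v y ≤ d := by
      have := SimpleGraph.dist_le q'.reverse
      rwa [SimpleGraph.Walk.length_reverse, hq'l] at this
    have hdy_ge : d ≤ G.dist v y := by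
      obtain ⟨r, hr⟩ := SimpleGraph.Reachable.exists_walk_length_eq_dist ⟨q'.reverse⟩
      have := SimpleGraph.dist_le (r.concat hadj.symm)
      rw [SimpleGraph.Walk.length_concat, hr, hd] at this
      omega
    exact ⟨y, hadj.symm, le_antisymm hdy_le hdy_ge⟩

lemma netGraph_mono_s3 {S : V → Finset V} {v : V} {T : Finset V} (hsub : S v ⊆ T) :
    netGraph S ≤ netGraph (Function.update S v T) := by
  intro x y hxy
  obtain ⟨hne, hmem⟩ := hxy
  refine ⟨hne, ?_⟩
  rcases hmem with h | h
  · left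
    by_cases hx : x = v
    · subst hx; rw [Function.update_self]; exact hsub h
    · rwa [Function.update_of_ne hx]
  · right
    by_cases hy : y = v
    · subst hy; rw [Function.update_self]; exact hsub h
    · rwa [Function.update_of_ne hy]

lemma netGraph_adj_update {S : V → Finset V} {v : V} {T : Finset V} (hvT : v ∉ T)
    {u : V} (hu : u ∈ T) : (netGraph (Function.update S v T)).Adj v u := by
  refine ⟨fun h => hvT (h ▸ hu), Or.inl ?_⟩
  rw [Function.update_self]; exact hu

/-- Core deviation inequality. -/
lemma nash_main (α : ℝ) (hα0 : 0 ≤ α) (S : V → Finset V) (hNash : IsNash α S)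
    (hconn : (netGraph S).Connected) (v : V) (T : Finset V) (hvT : v ∉ T)
    (hsub : S v ⊆ T) (c : V → ℕ)
    (hpt : ∀ w, (netGraph (Function.update S v T)).dist v w + c w ≤ (netGraph S).dist v w) :
    α * (S v).card + ∑ w, (c w : ℝ) ≤ α * T.card := by
  set G := netGraph S
  set G' := netGraph (Function.update S v T) with hG'
  have hG'conn : G'.Connected := hconn.mono (netGraph_mono_s3 hsub)
  have hN := hNash v T hvT
  unfold netCost at hN
  rw [Function.update_self] at hN
  have hA : ∑ w, (G.edist v w : ℝ≥0∞) = ∑ w, ((G.dist v w : ℕ) : ℝ≥0∞) :=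
    Finset.sum_congr rfl fun w _ => edist_cast' (hconn v w)
  have hB : ∑ w, (G'.edist v w : ℝ≥0∞) = ∑ w, ((G'.dist v w : ℕ) : ℝ≥0∞) :=
    Finset.sum_congr rfl fun w _ => edist_cast' (hG'conn v w)
  rw [hA, hB] at hN
  set X := ENNReal.ofReal α * ((S v).card : ℝ≥0∞) with hX
  set A := ∑ w, ((G.dist v w : ℕ) : ℝ≥0∞) with hAd
  set B := ∑ w, ((G'.dist v w : ℕ) : ℝ≥0∞) with hBd
  set K := ∑ w, ((c w : ℕ) : ℝ≥0∞) with hK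
  have hBK : B + K ≤ A := by
    rw [hBd, hK, ← Finset.sum_add_distrib]
    exact Finset.sum_le_sum fun w _ => by exact_mod_cast hpt w
  have hBfin : B ≠ ⊤ := by
    rw [hBd]
    exact ENNReal.sum_ne_top.mpr fun w _ => ENNReal.natCast_ne_top _
  have h1 : X + K + B ≤ ENNReal.ofReal α * (T.card : ℝ≥0∞) + B := by
    calc X + K + B = X + (B + K) := by ring
    _ ≤ X + A := by exact add_le_add_right hBK X
    _ ≤ ENNReal.ofReal α * (T.card : ℝ≥0∞) + B := hN
  have h2 : X + K ≤ ENNReal.ofReal α * (T.card : ℝ≥0∞) :=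
    (ENNReal.add_le_add_iff_right hBfin).mp h1
  -- convert to reals
  have hfin2 : ENNReal.ofReal α * (T.card : ℝ≥0∞) ≠ ⊤ :=
    ENNReal.mul_ne_top ENNReal.ofReal_ne_top (ENNReal.natCast_ne_top _)
  have := ENNReal.toReal_mono hfin2 h2
  rw [ENNReal.toReal_add, ENNReal.toReal_mul, ENNReal.toReal_mul, ENNReal.toReal_ofReal hα0,
    ENNReal.toReal_natCast, ENNReal.toReal_natCast] at this
  · rw [hK, ENNReal.toReal_sum (fun w _ => ENNReal.natCast_ne_top _)] at this
    simpa using this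
  · exact ENNReal.mul_ne_top ENNReal.ofReal_ne_top (ENNReal.natCast_ne_top _)
  · rw [hK]; exact ENNReal.sum_ne_top.mpr fun w _ => ENNReal.natCast_ne_top _

/-- Key lemma (ii): if `dist x u ≥ 4` then `deg u + 3 ≤ α`. -/
lemma keyC (α : ℝ) (hα0 : 0 ≤ α) (S : V → Finset V) (hS : ∀ v, v ∉ S v)
    (hNash : IsNash α S) (hconn : (netGraph S).Connected) {x u : V}
    (h4 : 4 ≤ (netGraph S).dist x u) :
    ((netGraph S).degree u : ℝ) + 3 ≤ α := by
  set G := netGraph S with hG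
  have hxu : x ≠ u := by
    intro h; rw [h, SimpleGraph.dist_self] at h4; omega
  set T : Finset V := insert u (S x) with hT
  have hxT : x ∉ T := by
    rw [hT, Finset.mem_insert]
    push_neg
    exact ⟨hxu, hS x⟩
  have hsub : S x ⊆ T := Finset.subset_insert _ _
  set G' := netGraph (Function.update S x T) with hG'
  have hmono : G ≤ G' := netGraph_mono_s3 hsub
  have hadj'u : G'.Adj x u := netGraph_adj_update hxT (Finset.mem_insert_self _ _)
  set c : V → ℕ := fun w => (if w = u then 3 else 0) + (if G.Adj u w then 1 else 0) with hc
  have hpt : ∀ w, G'.dist x w + c w ≤ G.dist x w := by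
    intro w
    by_cases hw : w = u
    · subst hw
      have h1 : G'.dist x w = 1 := SimpleGraph.dist_eq_one_iff_adj.mpr hadj'u
      have : c w = 3 := by simp [hc, SimpleGraph.irrefl]
      omega
    · by_cases hadj : G.Adj u w
      · have hcw : c w = 1 := by simp [hc, hw, hadj]
        have h2 : G'.dist x w ≤ 2 := by
          simpa using SimpleGraph.dist_le
            (SimpleGraph.Walk.cons hadj'u (SimpleGraph.Walk.cons (hmono hadj) SimpleGraph.Walk.nil))
        have h3 : 3 ≤ G.dist x w := by
          have htri : G.dist x u ≤ G.dist x w + G.dist w u := hconn.dist_triangle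
          have : G.dist w u = 1 := SimpleGraph.dist_eq_one_iff_adj.mpr hadj.symm
          omega
        omega
      · have hcw : c w = 0 := by simp [hc, hw, hadj]
        have := SimpleGraph.Reachable.dist_anti hmono (hconn x w)
        omega
  have hmain := nash_main α hα0 S hNash hconn x T hxT hsub c hpt
  have hTcard : (T.card : ℝ) ≤ (S x).card + 1 := by
    exact_mod_cast Finset.card_insert_le _ _
  have hsum : ∑ w, (c w : ℝ) = 3 + (G.degree u : ℝ) := by
    have : ∀ w, (c w : ℝ) = (if w = u then (3:ℝ) else 0) + (if G.Adj u w then 1 else 0) := by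
      intro w; simp only [hc]; push_cast; norm_num
    rw [Finset.sum_congr rfl fun w _ => this w, Finset.sum_add_distrib]
    congr 1
    · simp
    · rw [Finset.sum_boole]
      congr 1
      rw [SimpleGraph.degree]
      congr 1
      ext y
      simp [SimpleGraph.mem_neighborFinset]
  rw [hsum] at hmain
  nlinarith

/-- Key lemma (i): `n ≤ deg v + α * |N₂(v)| + 1`. -/
lemma keyB (α : ℝ) (hα0 : 0 ≤ α) (S : V → Finset V) (hS : ∀ v, v ∉ S v)
    (hNash : IsNash α S) (hconn : (netGraph S).Connected) (v : V) :
    (Fintype.card V : ℝ) ≤ ((netGraph S).degree v : ℝ)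
      + α * ((Finset.univ.filter fun w => (netGraph S).dist v w = 2).card : ℝ) + 1 := by
  set G := netGraph S with hG
  set N₂ : Finset V := Finset.univ.filter fun w => G.dist v w = 2 with hN2
  set T : Finset V := S v ∪ N₂ with hT
  have hvT : v ∉ T := by
    rw [hT, Finset.mem_union]
    push_neg
    refine ⟨hS v, ?_⟩
    simp [hN2, SimpleGraph.dist_self]
  have hsub : S v ⊆ T := Finset.subset_union_left
  set G' := netGraph (Function.update S v T) with hG'
  have hmono : G ≤ G' := netGraph_mono_s3 hsub
  set c : V → ℕ := fun w => if 2 ≤ G.dist v w then 1 else 0 with hc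
  have main : ∀ d w, G.dist v w ≤ d → 2 ≤ G.dist v w → G'.dist v w + 1 ≤ G.dist v w := by
    intro d
    induction d with
    | zero => intro w h1 h2; omega
    | succ d ih =>
      intro w h1 h2
      by_cases h2' : G.dist v w = 2
      · have hwv : w ≠ v := by
          intro h; rw [h, SimpleGraph.dist_self] at h2'; omega
        have hwT : w ∈ T := by
          rw [hT, Finset.mem_union]; right; simp [hN2, h2']
        have : G'.Adj v w := netGraph_adj_update hvT hwT
        have := SimpleGraph.dist_eq_one_iff_adj.mpr this
        omega
      · have h3 : 3 ≤ G.dist v w := by omega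
        obtain ⟨y, hyw, hy⟩ := exists_pred (hconn v w)
          (show G.dist v w = (G.dist v w - 1) + 1 by omega)
        have hy2 : 2 ≤ G.dist v y := by omega
        have ihy := ih y (by omega) hy2
        have hstep : G'.dist v w ≤ G'.dist v y + 1 := by
          obtain ⟨p, hp⟩ := SimpleGraph.Reachable.exists_walk_length_eq_dist
            ((hconn.mono hmono) v y)
          have := SimpleGraph.dist_le (p.concat (hmono hyw))
          rwa [SimpleGraph.Walk.length_concat, hp] at this
        omega
  have hpt : ∀ w, G'.dist v w + c w ≤ G.dist v w := by
    intro w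
    by_cases h2 : 2 ≤ G.dist v w
    · have := main (G.dist v w) w le_rfl h2
      simp only [hc, if_pos h2]
      omega
    · simp only [hc, if_neg h2]
      have := SimpleGraph.Reachable.dist_anti hmono (hconn v w)
      omega
  have hmain := nash_main α hα0 S hNash hconn v T hvT hsub c hpt
  have hTcard : (T.card : ℝ) ≤ (S v).card + N₂.card := by
    exact_mod_cast Finset.card_union_le _ _
  have hsum : ∑ w, (c w : ℝ) = ((Finset.univ.filter fun w => 2 ≤ G.dist v w).card : ℝ) := by
    have : ∀ w, (c w : ℝ) = if 2 ≤ G.dist v w then (1:ℝ) else 0 := by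
      intro w; simp only [hc]; push_cast; norm_num
    rw [Finset.sum_congr rfl fun w _ => this w, Finset.sum_boole]
  -- counting
  have hcount : (Fintype.card V : ℕ) ≤ (Finset.univ.filter fun w => 2 ≤ G.dist v w).card
      + (G.degree v + 1) := by
    have hsplit := Finset.card_filter_add_card_filter_not
      (s := Finset.univ) (p := fun w => 2 ≤ G.dist v w)
    have hsub1 : (Finset.univ.filter fun w => ¬ 2 ≤ G.dist v w)
        ⊆ insert v (G.neighborFinset v) := by
      intro w hw
      simp only [Finset.mem_filter, Finset.mem_univ, true_and, not_le] at hw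
      interval_cases h : G.dist v w
      · have : v = w := (hconn.dist_eq_zero_iff).mp h
        simp [← this]
      · have : G.Adj v w := SimpleGraph.dist_eq_one_iff_adj.mp h
        simp [SimpleGraph.mem_neighborFinset, this]
    have h2 : (Finset.univ.filter fun w => ¬ 2 ≤ G.dist v w).card ≤ G.degree v + 1 := by
      calc _ ≤ (insert v (G.neighborFinset v)).card := Finset.card_le_card hsub1
        _ ≤ (G.neighborFinset v).card + 1 := Finset.card_insert_le _ _
        _ = G.degree v + 1 := rfl
    rw [← Finset.card_univ, ← hsplit]
    omega
  rw [hsum] at hmain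
  have hcount' : (Fintype.card V : ℝ) ≤ ((Finset.univ.filter fun w => 2 ≤ G.dist v w).card : ℝ)
      + (G.degree v : ℝ) + 1 := by exact_mod_cast hcount
  nlinarith [hmain, hTcard, hcount']


end AuxNetworkCreation

/-- In a connected Nash equilibrium on `n` vertices with `α > 1` and `n > α³`,
the graph has diameter at most 4. -/
theorem stmt3 {V : Type*} [Fintype V] [DecidableEq V] (α : ℝ) (hα : 1 < α)
    (S : V → Finset V) (hS : ∀ v, v ∉ S v) (hNash : IsNash α S)
    (hconn : (netGraph S).Connected)
    (hn : α ^ 3 < (Fintype.card V : ℝ)) :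
    ∀ v w : V, (netGraph S).dist v w ≤ 4 := by
  intro v w
  by_contra hcon
  push_neg at hcon
  set G := netGraph S with hG
  have h5 : 5 ≤ G.dist v w := hcon
  have hα0 : (0:ℝ) ≤ α := by linarith
  -- v itself has low degree
  have hdegv : (G.degree v : ℝ) + 3 ≤ α := by
    apply keyC α hα0 S hS hNash hconn (x := w)
    rw [← hG, SimpleGraph.dist_comm]
    omega
  -- neighbors of v have low degree
  have hnb : ∀ y ∈ G.neighborFinset v, (G.degree y : ℝ) + 3 ≤ α := by
    intro y hy
    rw [SimpleGraph.mem_neighborFinset] at hy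
    apply keyC α hα0 S hS hNash hconn (x := w)
    have htri : G.dist v w ≤ G.dist v y + G.dist y w := hconn.dist_triangle
    have h1 : G.dist v y = 1 := SimpleGraph.dist_eq_one_iff_adj.mpr hy
    rw [← hG, SimpleGraph.dist_comm]
    omega
  -- v has a neighbor
  have hdeg1 : 1 ≤ G.degree v := by
    obtain ⟨p, hp⟩ := SimpleGraph.Reachable.exists_walk_length_eq_dist (hconn v w)
    cases p with
    | nil => rw [← hp] at h5; simp at h5
    | cons h q =>
      rw [← SimpleGraph.card_neighborFinset_eq_degree]
      exact Finset.card_pos.mpr ⟨_, SimpleGraph.mem_neighborFinset _ _ _ |>.mpr h⟩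
  have hα4 : (4:ℝ) ≤ α := by
    have : (1:ℝ) ≤ (G.degree v : ℝ) := by exact_mod_cast hdeg1
    linarith
  -- N₂ bound
  set N₂ : Finset V := Finset.univ.filter fun z => G.dist v z = 2 with hN2
  have hsub2 : N₂ ⊆ (G.neighborFinset v).biUnion fun y => G.neighborFinset y \ {v} := by
    intro z hz
    rw [hN2, Finset.mem_filter] at hz
    obtain ⟨y, hyz, hy1⟩ := exists_pred (hconn v z) (show G.dist v z = 1 + 1 from hz.2)
    rw [Finset.mem_biUnion]
    refine ⟨y, ?_, ?_⟩
    · exact (SimpleGraph.mem_neighborFinset _ _ _).mpr (SimpleGraph.dist_eq_one_iff_adj.mp hy1)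
    · rw [Finset.mem_sdiff, Finset.mem_singleton]
      refine ⟨(SimpleGraph.mem_neighborFinset _ _ _).mpr hyz, ?_⟩
      intro h
      rw [h, SimpleGraph.dist_self] at hz
      omega
  have hcard2 : (N₂.card : ℝ) ≤ (G.degree v : ℝ) * (α - 4) := by
    have h1 : N₂.card ≤ ∑ y ∈ G.neighborFinset v, (G.neighborFinset y \ {v}).card :=
      le_trans (Finset.card_le_card hsub2) (Finset.card_biUnion_le)
    have h2 : ∀ y ∈ G.neighborFinset v, ((G.neighborFinset y \ {v}).card : ℝ) ≤ α - 4 := by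
      intro y hy
      have hvy : v ∈ G.neighborFinset y := by
        rw [SimpleGraph.mem_neighborFinset] at hy ⊢
        exact hy.symm
      have : (G.neighborFinset y \ {v}).card = G.degree y - 1 := by
        rw [Finset.card_sdiff_of_subset (Finset.singleton_subset_iff.mpr hvy), Finset.card_singleton,
          SimpleGraph.card_neighborFinset_eq_degree]
      rw [this]
      have hd1 : 1 ≤ G.degree y := by
        rw [← SimpleGraph.card_neighborFinset_eq_degree]
        exact Finset.card_pos.mpr ⟨v, hvy⟩
      have := hnb y hy
      have : ((G.degree y - 1 : ℕ) : ℝ) = (G.degree y : ℝ) - 1 := by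
        push_cast [hd1]; ring
      rw [this]
      linarith [hnb y hy]
    calc (N₂.card : ℝ) ≤ ∑ y ∈ G.neighborFinset v, ((G.neighborFinset y \ {v}).card : ℝ) := by
          exact_mod_cast h1
      _ ≤ ∑ y ∈ G.neighborFinset v, (α - 4) := Finset.sum_le_sum h2
      _ = (G.degree v : ℝ) * (α - 4) := by
          rw [Finset.sum_const, SimpleGraph.card_neighborFinset_eq_degree, nsmul_eq_mul]
  have hB := keyB α hα0 S hS hNash hconn v
  rw [← hN2] at hB
  -- final arithmetic
  have hdnn : (0:ℝ) ≤ (G.degree v : ℝ) := Nat.cast_nonneg _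
  have h1 : (N₂.card : ℝ) ≤ (α - 3) * (α - 4) := by nlinarith
  have h2 : α * (N₂.card : ℝ) ≤ α * ((α - 3) * (α - 4)) :=
    mul_le_mul_of_nonneg_left h1 (by linarith)
  have h3 : (Fintype.card V : ℝ) ≤ (α - 3) + α * ((α - 3) * (α - 4)) + 1 := by linarith
  nlinarith [hα4, sq_nonneg (α - 4)]
end

section
/- In a connected Nash equilibrium graph of the network creation game with non-integral parameter α > 2 and n > α³ vertices, for any vertex v with levels N_1, N_2 (vertices at distance 1 and 2 from v), any vertex w ∈ N_2 buys at most |N_1|·α/(α−⌊α⌋) edges to other vertices of N_2. -/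
open scoped ENNReal

section Aux
open SimpleGraph
variable {V : Type*} [Fintype V] [DecidableEq V]

lemma walk_transfer_aux {G G' : SimpleGraph V} {a b w : V} (p : G.Walk a b)
    (hw : w ∉ p.support)
    (h : ∀ x y, x ≠ w → y ≠ w → G.Adj x y → G'.Adj x y) :
    ∃ q : G'.Walk a b, q.length = p.length := by
  induction p with
  | nil => exact ⟨.nil, rfl⟩
  | @cons u c b ha q ih =>
    rw [Walk.support_cons, List.mem_cons] at hw
    push_neg at hw
    obtain ⟨q', hq'⟩ := ih hw.2
    exact ⟨.cons (h u c (fun h' => hw.1 h'.symm)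
      (fun h' => hw.2 (h' ▸ q.start_mem_support)) ha) q', by simp [hq']⟩

lemma exists_mid_s4 {G : SimpleGraph V} {a b : V} (h : G.edist a b = 2) :
    ∃ u, G.Adj a u ∧ G.Adj u b := by
  obtain ⟨p, hp⟩ := SimpleGraph.exists_walk_of_edist_eq_coe (k := 2) h
  cases p with
  | nil => simp at hp
  | @cons _ c _ ha q =>
    cases q with
    | nil => simp at hp
    | @cons _ e _ hb r =>
      have hr : r.length = 0 := by simpa using hp
      have : G.edist e b = 0 := le_antisymm (by simpa [hr] using r.edist_le) zero_le
      rw [SimpleGraph.edist_eq_zero_iff] at this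
      subst this
      exact ⟨c, ha, hb⟩

lemma exists_geodesic_cons {G : SimpleGraph V} {a b : V} (hne : a ≠ b) {k : ℕ}
    (hk : G.edist a b = k) :
    ∃ (z : V) (_ : G.Adj a z) (r : G.Walk z b),
      a ∉ r.support ∧ r.length + 1 = k := by
  obtain ⟨p, hp⟩ := SimpleGraph.exists_walk_of_edist_eq_coe hk
  have hble : G.edist a b ≤ p.bypass.length := p.bypass.edist_le
  have hlen : p.bypass.length = k := by
    have h2 := p.length_bypass_le
    rw [hp] at h2
    rw [hk] at hble
    exact_mod_cast le_antisymm (by exact_mod_cast h2) (by exact_mod_cast hble)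
  have hpath : p.bypass.IsPath := p.bypass_isPath
  cases hq : p.bypass with
  | nil => exact absurd rfl hne
  | @cons _ z _ ha r =>
    rw [hq] at hpath hlen
    have hnodup := hpath.support_nodup
    rw [Walk.support_cons, List.nodup_cons] at hnodup
    exact ⟨z, ha, r, hnodup.1, by simpa using hlen⟩


lemma desc_bound (α : ℝ) (hα0 : 0 ≤ α) (S : V → Finset V) (hS : ∀ v, v ∉ S v)
    (hNash : IsNash α S) (hconn : (netGraph S).Connected) (v x : V)
    (hx : (netGraph S).edist v x = 2) :
    ((Finset.univ.filter fun y => y ≠ x ∧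
        (netGraph S).edist v y = (netGraph S).edist x y + 2).card : ℝ) + 1 ≤ α := by
  set G := netGraph S with hG
  have hfin : ∀ a b : V, G.edist a b ≠ ⊤ := fun a b =>
    (edist_ne_top_iff_reachable).mpr (hconn a b)
  have hvx : v ≠ x := by
    intro h; rw [h, edist_self] at hx; exact (by norm_num : (0:ℕ∞) ≠ 2) hx
  have hxSv : x ∉ S v := by
    intro h
    have : G.Adj v x := by rw [hG]; exact ⟨hvx, Or.inl h⟩
    rw [← edist_eq_one_iff_adj] at this
    rw [this] at hx; norm_num at hx
  set Desc := Finset.univ.filter fun y => y ≠ x ∧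
      G.edist v y = G.edist x y + 2 with hDesc
  set S'' := Function.update S v (insert x (S v)) with hS''
  set G'' := netGraph S'' with hG''
  have hle : G ≤ G'' := by
    intro a b hab
    rw [hG] at hab; rw [hG'']
    refine ⟨hab.1, ?_⟩
    rcases hab.2 with h | h
    · left
      by_cases ha : a = v
      · subst ha; simpa [hS''] using Or.inr h
      · simpa [hS'', Function.update_of_ne ha] using h
    · right
      by_cases hb : b = v
      · subst hb; simpa [hS''] using Or.inr h
      · simpa [hS'', Function.update_of_ne hb] using h
  have hadj'' : G''.Adj v x := by rw [hG'']; exact ⟨hvx, Or.inl (by simp [hS''])⟩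
  have hvx1 : G''.edist v x ≤ 1 := (edist_eq_one_iff_adj.mpr hadj'').le
  -- pointwise inequality
  have hpt : ∀ y : V, (G''.edist v y : ℝ≥0∞) + (if y ∈ insert x Desc then 1 else 0)
      ≤ (G.edist v y : ℝ≥0∞) := by
    intro y
    by_cases hy : y ∈ insert x Desc
    · rw [if_pos hy]
      rcases Finset.mem_insert.mp hy with rfl | hy
      · rw [hx]
        have h1 : (G''.edist v y : ℝ≥0∞) ≤ 1 := by exact_mod_cast hvx1
        calc (G''.edist v y : ℝ≥0∞) + 1 ≤ 1 + 1 := by gcongr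
          _ ≤ ((2:ℕ∞) : ℝ≥0∞) := by norm_num
      · rw [hDesc, Finset.mem_filter] at hy
        obtain ⟨-, hyx, hyd⟩ := hy
        have h1 : G''.edist v y ≤ 1 + G.edist x y := by
          calc G''.edist v y ≤ G''.edist v x + G''.edist x y := SimpleGraph.edist_triangle
            _ ≤ 1 + G.edist x y := add_le_add hvx1 (edist_anti hle)
        rw [hyd]
        have h2 : (G''.edist v y : ℝ≥0∞) ≤ 1 + (G.edist x y : ℝ≥0∞) := by
          exact_mod_cast h1
        calc (G''.edist v y : ℝ≥0∞) + 1 ≤ (1 + (G.edist x y : ℝ≥0∞)) + 1 := by gcongr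
          _ = ((G.edist x y : ℕ∞) : ℝ≥0∞) + 2 := by ring
          _ = (((G.edist x y + 2 : ℕ∞)) : ℝ≥0∞) := by norm_cast
    · rw [if_neg hy, add_zero]
      exact_mod_cast edist_anti hle (u := v) (v := y)
  -- summed inequality
  have hsum : (∑ y, (G''.edist v y : ℝ≥0∞)) + (insert x Desc).card ≤
      ∑ y, (G.edist v y : ℝ≥0∞) := by
    calc (∑ y, (G''.edist v y : ℝ≥0∞)) + (insert x Desc).card
        = ∑ y, ((G''.edist v y : ℝ≥0∞) + (if y ∈ insert x Desc then 1 else 0)) := by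
          rw [Finset.sum_add_distrib]
          congr 1
          rw [Finset.sum_ite_mem, Finset.univ_inter, Finset.sum_const, nsmul_eq_mul, mul_one]
      _ ≤ ∑ y, (G.edist v y : ℝ≥0∞) := Finset.sum_le_sum fun y _ => hpt y
  -- Nash
  have hvT : v ∉ insert x (S v) := by
    simp only [Finset.mem_insert]
    push_neg
    exact ⟨hvx, hS v⟩
  have hnash := hNash v (insert x (S v)) hvT
  rw [netCost, netCost, Function.update_self] at hnash
  have hcard : ((insert x (S v)).card : ℝ≥0∞) = (S v).card + 1 := by
    rw [Finset.card_insert_of_notMem hxSv]; push_cast; ring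
  rw [hcard, mul_add, mul_one] at hnash
  -- cancellation
  set A := ENNReal.ofReal α * ((S v).card : ℝ≥0∞) with hA
  set Sig0 := ∑ y, (G.edist v y : ℝ≥0∞) with hSig0
  set Sig2 := ∑ y, (G''.edist v y : ℝ≥0∞) with hSig2
  have hSig0fin : Sig0 ≠ ⊤ := by
    rw [hSig0]
    refine (ENNReal.sum_lt_top.mpr fun y _ => ?_).ne
    rw [← ENat.coe_toNat (hfin v y)]
    simpa using ENNReal.natCast_lt_top _
  have hSig2fin : Sig2 ≠ ⊤ := by
    intro h
    apply hSig0fin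
    have := le_trans (le_add_right le_rfl : Sig2 ≤ Sig2 + (insert x Desc).card) hsum
    rw [h] at this
    exact top_le_iff.mp this
  -- hnash : A + Sig0 ≤ A + ofReal α + Sig2
  have key : ((insert x Desc).card : ℝ≥0∞) ≤ ENNReal.ofReal α := by
    have h1 : A + (Sig2 + (insert x Desc).card) ≤ A + (ENNReal.ofReal α + Sig2) := by
      calc A + (Sig2 + (insert x Desc).card) ≤ A + Sig0 := by gcongr
        _ ≤ A + ENNReal.ofReal α + Sig2 := hnash
        _ = A + (ENNReal.ofReal α + Sig2) := by ring
    have hAfin : A ≠ ⊤ := by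
      rw [hA]
      exact ENNReal.mul_ne_top ENNReal.ofReal_ne_top (ENNReal.natCast_ne_top _)
    rw [ENNReal.add_le_add_iff_left hAfin] at h1
    rw [add_comm Sig2 _] at h1
    rwa [ENNReal.add_le_add_iff_right hSig2fin] at h1
  have hxD : x ∉ Desc := by simp [hDesc]
  have hcard2 : (insert x Desc).card = Desc.card + 1 := Finset.card_insert_of_notMem hxD
  rw [hcard2] at key
  have : ((Desc.card + 1 : ℕ) : ℝ) ≤ α := by
    rw [← ENNReal.ofReal_natCast (Desc.card + 1)] at key
    exact (ENNReal.ofReal_le_ofReal_iff hα0).mp key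
  push_cast at this
  linarith


end Aux

section Main
open SimpleGraph

/-- In a connected Nash equilibrium with non-integral `α > 2` and `n > α³`,
any vertex `w` at distance 2 from `v` buys at most `|N₁| ⬝ α / (α - ⌊α⌋)` edges
to other vertices at distance 2 from `v`. -/
theorem stmt4 {V : Type*} [Fintype V] [DecidableEq V] (α : ℝ) (hα : 2 < α)
    (hni : (⌊α⌋ : ℝ) < α)
    (S : V → Finset V) (hS : ∀ v, v ∉ S v) (hNash : IsNash α S)
    (hconn : (netGraph S).Connected)
    (hn : α ^ 3 < (Fintype.card V : ℝ))
    (v w : V) (hw : (netGraph S).edist v w = 2) :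
    (((S w).filter (fun x => (netGraph S).edist v x = 2)).card : ℝ) ≤
      ({y : V | (netGraph S).edist v y = 1}.ncard : ℝ) * (α / (α - ⌊α⌋)) := by

  have hα0 : (0:ℝ) ≤ α := by linarith
  have descB : ∀ x : V, (netGraph S).edist v x = 2 →
      ((Finset.univ.filter fun y => y ≠ x ∧
        (netGraph S).edist v y = (netGraph S).edist x y + 2).card : ℝ) + 1 ≤ α :=
    fun x hx => desc_bound α hα0 S hS hNash hconn v x hx

  set G := netGraph S with hG
  have hfin : ∀ a b : V, G.edist a b ≠ ⊤ := fun a b =>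
    (edist_ne_top_iff_reachable).mpr (hconn a b)
  have hvw : v ≠ w := by
    intro h; rw [h, edist_self] at hw; norm_num at hw
  -- the first and second neighbourhoods, and the deleted edge set
  set N1 : Finset V := Finset.univ.filter (fun y => G.edist v y = 1) with hN1
  set D : Finset V := (S w).filter (fun x => G.edist v x = 2) with hD
  set Tf : Finset V := ((S w).filter (fun x => ¬ G.edist v x = 2)) ∪ N1 with hTf
  have hwN1 : w ∉ N1 := by
    simp only [hN1, Finset.mem_filter]
    rintro ⟨-, h1⟩; rw [h1] at hw; norm_num at hw
  have hwT : w ∉ Tf := by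
    simp only [hTf, Finset.mem_union]
    rintro (h | h)
    · exact hS w (Finset.mem_filter.mp h).1
    · exact hwN1 h
  set S' := Function.update S w Tf with hS'
  set G' := netGraph S' with hG'
  -- edge facts
  have fKeep : ∀ x y : V, x ≠ w → y ≠ w → G.Adj x y → G'.Adj x y := by
    intro x y hx hy hxy
    rw [hG] at hxy; rw [hG']
    refine ⟨hxy.1, ?_⟩
    rw [hS', Function.update_of_ne hx, Function.update_of_ne hy]
    exact hxy.2
  have memN1 : ∀ {u : V}, G.Adj v u → u ∈ N1 := by
    intro u hu
    simp only [hN1, Finset.mem_filter, Finset.mem_univ, true_and]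
    exact edist_eq_one_iff_adj.mpr hu
  have hN1w : ∀ u ∈ N1, u ≠ w := fun u hu h => hwN1 (h ▸ hu)
  have fN1 : ∀ u ∈ N1, G'.Adj w u := by
    intro u hu
    rw [hG']
    exact ⟨fun h => hN1w u hu h.symm, Or.inl (by
      rw [hS', Function.update_self, hTf]; exact Finset.mem_union_right _ hu)⟩
  have fDel : ∀ z : V, G.Adj w z → ¬ G'.Adj w z → z ∈ D := by
    intro z hz hz'
    have hzw : z ≠ w := fun h => G.irrefl (h ▸ hz)
    rw [hG'] at hz'
    change ¬ (w ≠ z ∧ (z ∈ S' w ∨ w ∈ S' z)) at hz'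
    push_neg at hz'
    have h2 := hz' (fun h => hzw h.symm)
    rw [hS', Function.update_self, Function.update_of_ne hzw] at h2
    have hzSw : z ∈ S w := by
      rcases (show (netGraph S).Adj w z by rw [← hG]; exact hz).2 with h | h
      · exact h
      · exact absurd h h2.2
    have hzT := h2.1
    rw [hTf, Finset.mem_union] at hzT
    push_neg at hzT
    have := hzT.1
    rw [Finset.mem_filter] at this
    push_neg at this
    rw [hD, Finset.mem_filter]
    exact ⟨hzSw, this hzSw⟩
  -- basic new-graph distance bounds
  have adj_edist_le : ∀ {H : SimpleGraph V} {a b : V}, H.Adj a b → H.edist a b ≤ 1 :=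
    fun h => (edist_eq_one_iff_adj.mpr h).le
  have L2 : ∀ x : V, G.edist v x = 2 → G'.edist w x ≤ 2 := by
    intro x hx
    by_cases hxw : x = w
    · subst hxw; simp
    · obtain ⟨u, hvu, hux⟩ := exists_mid_s4 hx
      have huN1 : u ∈ N1 := memN1 hvu
      have hadj1 : G'.Adj w u := fN1 u huN1
      have hadj2 : G'.Adj u x := fKeep u x (hN1w u huN1) hxw hux
      calc G'.edist w x ≤ G'.edist w u + G'.edist u x := SimpleGraph.edist_triangle
        _ ≤ 1 + 1 := add_le_add (adj_edist_le hadj1) (adj_edist_le hadj2)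
        _ = 2 := by norm_num
  have Lwv : G'.edist w v ≤ 2 := by
    obtain ⟨u0, hvu0, hu0w⟩ := exists_mid_s4 hw
    have hu0N1 : u0 ∈ N1 := memN1 hvu0
    have hadj1 : G'.Adj w u0 := fN1 u0 hu0N1
    have hadj2 : G'.Adj u0 v := fKeep u0 v (hN1w u0 hu0N1) hvw hvu0.symm
    calc G'.edist w v ≤ G'.edist w u0 + G'.edist u0 v := SimpleGraph.edist_triangle
      _ ≤ 1 + 1 := add_le_add (adj_edist_le hadj1) (adj_edist_le hadj2)
      _ = 2 := by norm_num
  -- rerouting through a geodesic from v, when y is at least as close to v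
  have LR : ∀ y : V, y ≠ v → G.edist v y ≤ G.edist w y → G'.edist w y ≤ G.edist w y := by
    intro y hyv hle2
    obtain ⟨p, hp⟩ := (hconn v y).exists_walk_length_eq_edist
    have hwsup : w ∉ p.support := by
      intro hmem
      have hsplit := congrArg Walk.length (p.take_spec hmem)
      rw [Walk.length_append] at hsplit
      have h2t : (2:ℕ∞) ≤ (p.takeUntil w hmem).length := by
        rw [← hw]; exact Walk.edist_le _
      have hwy : G.edist w y ≤ (p.dropUntil w hmem).length := Walk.edist_le _
      have hbig : 2 + G.edist w y ≤ G.edist v y := by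
        rw [← hp, ← hsplit]
        push_cast
        exact add_le_add h2t hwy
      have hsmall := le_trans hbig (le_trans hle2 (le_add_left le_rfl : G.edist w y ≤ 2 + G.edist w y))
      -- 2 + e ≤ 2 + e with strictness issue: derive contradiction properly
      have : 2 + G.edist w y ≤ G.edist w y := le_trans hbig hle2
      lift G.edist w y to ℕ using hfin w y with k hk
      rw [show ((2:ℕ∞) + k = ((2 + k : ℕ) : ℕ∞)) by push_cast; ring] at this
      have h9 : 2 + k ≤ k := by exact_mod_cast this
      omega
    cases p with
    | nil => exact absurd rfl hyv.symm
    | @cons _ u _ ha q =>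
      have hwq : w ∉ q.support := fun h => hwsup (by rw [Walk.support_cons]; exact List.mem_cons_of_mem _ h)
      have huN1 : u ∈ N1 := memN1 ha
      obtain ⟨q', hq'⟩ := walk_transfer_aux q hwq fKeep
      have : G'.edist w y ≤ (Walk.cons (fN1 u huN1) q').length := Walk.edist_le _
      rw [Walk.length_cons, hq'] at this
      calc G'.edist w y ≤ ((q.length + 1 : ℕ) : ℕ∞) := by exact_mod_cast this
        _ = ((Walk.cons ha q).length : ℕ∞) := by rw [Walk.length_cons]
        _ = G.edist v y := hp
        _ ≤ G.edist w y := hle2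
  -- global +1 bound
  have Lall : ∀ y : V, G'.edist w y ≤ G.edist w y + 1 := by
    intro y
    by_cases hyw : y = w
    · subst hyw; simp
    · lift G.edist w y to ℕ using hfin w y with k hk
      obtain ⟨z, haz, r, hwr, hrlen⟩ := exists_geodesic_cons (fun h => hyw h.symm) hk.symm
      obtain ⟨r', hr'⟩ := walk_transfer_aux r hwr fKeep
      by_cases hadj : G'.Adj w z
      · have : G'.edist w y ≤ (Walk.cons hadj r').length := Walk.edist_le _
        rw [Walk.length_cons, hr'] at this
        calc G'.edist w y ≤ ((r.length + 1 : ℕ) : ℕ∞) := by exact_mod_cast this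
          _ = (k : ℕ∞) := by rw [hrlen]
          _ ≤ (k : ℕ∞) + 1 := le_add_right le_rfl
      · have hzD : z ∈ D := fDel z haz hadj
        have hz2 : G.edist v z = 2 := (Finset.mem_filter.mp hzD).2
        have hzy : G'.edist z y ≤ r.length := by
          have := r'.edist_le; rw [hr'] at this; exact this
        calc G'.edist w y ≤ G'.edist w z + G'.edist z y := SimpleGraph.edist_triangle
          _ ≤ 2 + (r.length : ℕ∞) := add_le_add (L2 z hz2) hzy
          _ = ((r.length + 1 : ℕ) : ℕ∞) + 1 := by push_cast; ring
          _ = (k : ℕ∞) + 1 := by rw [hrlen]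
  -- the affected set
  set A : Finset V := D ∪ (Finset.univ.filter fun y => ∃ x ∈ D, y ≠ x ∧
    G.edist v y = G.edist x y + 2) with hA
  have Lmain : ∀ y : V, y ∉ A → G'.edist w y ≤ G.edist w y := by
    intro y hyA
    by_cases hyw : y = w
    · subst hyw; simp
    by_cases hyv : y = v
    · subst hyv
      have h2 : G.edist w y = 2 := by rw [SimpleGraph.edist_comm]; exact hw
      rw [h2]; exact Lwv
    rcases le_or_gt (G.edist v y) (G.edist w y) with hc | hc
    · exact LR y hyv hc
    · lift G.edist w y to ℕ using hfin w y with kw hkw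
      obtain ⟨z, haz, r, hwr, hrlen⟩ := exists_geodesic_cons (fun h => hyw h.symm) hkw.symm
      obtain ⟨r', hr'⟩ := walk_transfer_aux r hwr fKeep
      by_cases hadj : G'.Adj w z
      · have : G'.edist w y ≤ (Walk.cons hadj r').length := Walk.edist_le _
        rw [Walk.length_cons, hr'] at this
        calc G'.edist w y ≤ ((r.length + 1 : ℕ) : ℕ∞) := by exact_mod_cast this
          _ = (kw : ℕ∞) := by rw [hrlen]
      · exfalso
        have hzD : z ∈ D := fDel z haz hadj
        have hz2 : G.edist v z = 2 := (Finset.mem_filter.mp hzD).2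
        have hyz : y ≠ z := by
          intro h
          exact hyA (Finset.mem_union_left _ (h ▸ hzD))
        have hzy : G.edist z y ≤ (r.length : ℕ∞) := r.edist_le
        lift G.edist v y to ℕ using hfin v y with kv hkv
        lift G.edist z y to ℕ using hfin z y with ez hez
        have htri : (kv : ℕ∞) ≤ 2 + (ez : ℕ∞) := by
          rw [hkv, hez]
          calc G.edist v y ≤ G.edist v z + G.edist z y := SimpleGraph.edist_triangle
            _ = 2 + G.edist z y := by rw [hz2]
        have h1 : kv ≤ 2 + ez := by exact_mod_cast htri
        have h2 : ez ≤ r.length := by exact_mod_cast hzy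
        have h3 : kw < kv := by exact_mod_cast hc
        -- kw = r.length + 1, so kv ≤ 2 + ez ≤ 2 + r.length = kw + 1 ≤ kv
        have heq : kv = ez + 2 := by omega
        exact hyA (Finset.mem_union_right _ (Finset.mem_filter.mpr
          ⟨Finset.mem_univ y, z, hzD, hyz, by rw [← hkv, ← hez]; exact_mod_cast heq⟩))
  -- floor bound machinery
  have hfl2 : (2:ℤ) ≤ ⌊α⌋ := by
    have := Int.le_floor.mpr hα.le
    exact_mod_cast this
  set F : ℕ := ⌊α⌋.toNat with hF
  have hFcast : (F : ℝ) = (⌊α⌋ : ℝ) := by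
    rw [hF]
    exact_mod_cast congrArg Int.cast (Int.toNat_of_nonneg (by omega))
  have hF1 : 1 ≤ F := by omega
  -- cardinality bound for the affected set
  have hdesc_card : ∀ x ∈ D, (Finset.univ.filter fun y => y ≠ x ∧
      G.edist v y = G.edist x y + 2).card ≤ F - 1 := by
    intro x hxD
    have hx2 : G.edist v x = 2 := (Finset.mem_filter.mp hxD).2
    have hreal := descB x hx2
    set c := (Finset.univ.filter fun y => y ≠ x ∧
      G.edist v y = G.edist x y + 2).card with hc
    have : ((c + 1 : ℕ) : ℝ) ≤ α := by push_cast; linarith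
    have hint : ((c + 1 : ℕ) : ℤ) ≤ ⌊α⌋ := Int.le_floor.mpr (by exact_mod_cast this)
    omega
  have hAcard : A.card ≤ D.card * F := by
    have hsub : (Finset.univ.filter fun y => ∃ x ∈ D, y ≠ x ∧
        G.edist v y = G.edist x y + 2) ⊆ D.biUnion (fun x => Finset.univ.filter fun y =>
        y ≠ x ∧ G.edist v y = G.edist x y + 2) := by
      intro y hy
      rw [Finset.mem_filter] at hy
      obtain ⟨-, x, hxD, hxy⟩ := hy
      exact Finset.mem_biUnion.mpr ⟨x, hxD, Finset.mem_filter.mpr ⟨Finset.mem_univ y, hxy⟩⟩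
    calc A.card ≤ D.card + (Finset.univ.filter fun y => ∃ x ∈ D, y ≠ x ∧
        G.edist v y = G.edist x y + 2).card := Finset.card_union_le _ _
      _ ≤ D.card + ∑ x ∈ D, (Finset.univ.filter fun y =>
          y ≠ x ∧ G.edist v y = G.edist x y + 2).card := by
          gcongr
          exact le_trans (Finset.card_le_card hsub) (Finset.card_biUnion_le)
      _ ≤ D.card + ∑ _x ∈ D, (F - 1) := by
          gcongr with x hx
          exact hdesc_card x hx
      _ = D.card + D.card * (F - 1) := by rw [Finset.sum_const, smul_eq_mul]
      _ = D.card * F := by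
          have hFe : F - 1 + 1 = F := Nat.succ_pred_eq_of_pos hF1
          calc D.card + D.card * (F - 1) = D.card * (F - 1 + 1) := by ring
            _ = D.card * F := by rw [hFe]
  -- pointwise then summed distance comparison
  have hpt : ∀ y : V, (G'.edist w y : ℝ≥0∞) ≤ (G.edist w y : ℝ≥0∞) +
      (if y ∈ A then 1 else 0) := by
    intro y
    by_cases hy : y ∈ A
    · rw [if_pos hy]
      have := Lall y
      calc (G'.edist w y : ℝ≥0∞) ≤ ((G.edist w y + 1 : ℕ∞) : ℝ≥0∞) := by exact_mod_cast this
        _ = (G.edist w y : ℝ≥0∞) + 1 := by rw [ENat.toENNReal_add, ENat.toENNReal_one]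
    · rw [if_neg hy, add_zero]
      exact_mod_cast Lmain y hy
  have hsum : ∑ y, (G'.edist w y : ℝ≥0∞) ≤ (∑ y, (G.edist w y : ℝ≥0∞)) + A.card := by
    calc ∑ y, (G'.edist w y : ℝ≥0∞)
        ≤ ∑ y, ((G.edist w y : ℝ≥0∞) + (if y ∈ A then 1 else 0)) :=
          Finset.sum_le_sum fun y _ => hpt y
      _ = (∑ y, (G.edist w y : ℝ≥0∞)) + A.card := by
          rw [Finset.sum_add_distrib]
          congr 1
          rw [Finset.sum_ite_mem, Finset.univ_inter, Finset.sum_const, nsmul_eq_mul, mul_one]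
  -- Nash inequality for w
  have hnash := hNash w Tf hwT
  rw [netCost, netCost, Function.update_self] at hnash
  rw [← hG, ← hS', ← hG'] at hnash
  set Sg := ∑ y, (G.edist w y : ℝ≥0∞) with hSg
  set Sg' := ∑ y, (G'.edist w y : ℝ≥0∞) with hSg'
  have hSgfin : Sg ≠ ⊤ := by
    rw [hSg]
    refine (ENNReal.sum_lt_top.mpr fun y _ => ?_).ne
    rw [← ENat.coe_toNat (hfin w y)]
    simp only [ENat.toENNReal_coe]
    exact ENNReal.natCast_lt_top _
  have key : ENNReal.ofReal α * ((S w).card : ℝ≥0∞) ≤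
      ENNReal.ofReal α * (Tf.card : ℝ≥0∞) + (D.card * F : ℕ) := by
    have h1 : ENNReal.ofReal α * ((S w).card : ℝ≥0∞) + Sg ≤
        (ENNReal.ofReal α * (Tf.card : ℝ≥0∞) + (D.card * F : ℕ)) + Sg := by
      calc ENNReal.ofReal α * ((S w).card : ℝ≥0∞) + Sg ≤
          ENNReal.ofReal α * (Tf.card : ℝ≥0∞) + Sg' := hnash
        _ ≤ ENNReal.ofReal α * (Tf.card : ℝ≥0∞) + (Sg + A.card) := by gcongr
        _ ≤ ENNReal.ofReal α * (Tf.card : ℝ≥0∞) + (Sg + (D.card * F : ℕ)) := by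
            have h' : (A.card : ℝ≥0∞) ≤ ((D.card * F : ℕ) : ℝ≥0∞) := by exact_mod_cast hAcard
            exact add_le_add_right (add_le_add_right h' Sg) _
        _ = (ENNReal.ofReal α * (Tf.card : ℝ≥0∞) + (D.card * F : ℕ)) + Sg := by ring
    rwa [ENNReal.add_le_add_iff_right hSgfin] at h1
  -- convert to a real inequality
  have hcard_eq : D.card + ((S w).filter (fun x => ¬ G.edist v x = 2)).card = (S w).card := by
    rw [hD]
    exact Finset.card_filter_add_card_filter_not _
  have hTle : (Tf.card : ℝ) ≤ ((S w).filter (fun x => ¬ G.edist v x = 2)).card + N1.card := by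
    rw [hTf]
    exact_mod_cast Finset.card_union_le _ _
  have hreal : α * ((S w).card : ℝ) ≤ α * (Tf.card : ℝ) + (D.card * F : ℕ) := by
    have hlhs : (ENNReal.ofReal α * ((S w).card : ℝ≥0∞)).toReal = α * (S w).card := by
      rw [ENNReal.toReal_mul, ENNReal.toReal_ofReal hα0, ENNReal.toReal_natCast]
    have hrhs : (ENNReal.ofReal α * (Tf.card : ℝ≥0∞) + ((D.card * F : ℕ) : ℝ≥0∞)).toReal
        = α * Tf.card + (D.card * F : ℕ) := by
      rw [ENNReal.toReal_add, ENNReal.toReal_mul, ENNReal.toReal_ofReal hα0,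
        ENNReal.toReal_natCast, ENNReal.toReal_natCast]
      · exact ENNReal.mul_ne_top ENNReal.ofReal_ne_top (ENNReal.natCast_ne_top _)
      · exact ENNReal.natCast_ne_top _
    rw [← hlhs, ← hrhs]
    apply ENNReal.toReal_mono
    · rw [← lt_top_iff_ne_top]
      apply ENNReal.add_lt_top.mpr
      constructor
      · exact ENNReal.mul_lt_top ENNReal.ofReal_lt_top (ENNReal.natCast_lt_top _)
      · exact ENNReal.natCast_lt_top _
    · exact key
  -- final arithmetic
  have hsub : (0:ℝ) < α - ⌊α⌋ := by linarith
  have hfinal : (D.card : ℝ) * (α - ⌊α⌋) ≤ (N1.card : ℝ) * α := by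
    have hfn : ((S w).card : ℝ) = (D.card : ℝ) +
        (((S w).filter (fun x => ¬ G.edist v x = 2)).card : ℝ) := by exact_mod_cast hcard_eq.symm
    have hDF : ((D.card * F : ℕ) : ℝ) = (D.card : ℝ) * (⌊α⌋:ℝ) := by
      push_cast [hFcast]; ring
    nlinarith [hreal, hTle, hfn, hDF, mul_le_mul_of_nonneg_left hTle hα0]
  have hncard : ({y : V | G.edist v y = 1}.ncard : ℝ) = (N1.card : ℝ) := by
    congr 1
    rw [Set.ncard_eq_toFinset_card']
    congr 1
    rw [hN1]
    ext y
    simp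
  rw [hncard, ← mul_div_assoc]
  exact (le_div_iff₀ hsub).mpr hfinal

end Main
end

section
/- Let G be a graph on n vertices in which every vertex has degree greater than √(n log n), with n ≥ 2. Then for every vertex w, there exists a set T of at most ⌈√(n log n)⌉ vertices such that adding the edges from w to T makes every vertex of G within distance 2 of w. -/
open scoped ENNReal
open Finset

private lemma double_count {n : ℕ} (G : SimpleGraph (Fin n)) [DecidableRel G.Adj]
    (S : Finset (Fin n)) :
    ∑ v : Fin n, (G.neighborFinset v ∩ S).card = ∑ u ∈ S, G.degree u := by
  have h1 : ∀ v : Fin n, (G.neighborFinset v ∩ S).card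
      = ∑ u ∈ S, if G.Adj v u then 1 else 0 := by
    intro v
    rw [Finset.inter_comm, ← Finset.card_filter]
    congr 1
    ext u
    simp [SimpleGraph.mem_neighborFinset]
  simp_rw [h1]
  rw [Finset.sum_comm]
  refine Finset.sum_congr rfl fun u _ => ?_
  rw [← Finset.card_filter]
  rw [SimpleGraph.degree, SimpleGraph.neighborFinset_eq_filter]
  congr 1
  ext v
  simp [SimpleGraph.adj_comm]

private lemma exists_dominating {n : ℕ} (hn : 2 ≤ n) (G : SimpleGraph (Fin n))
    [DecidableRel G.Adj] {c : ℕ} (hc1 : 1 ≤ c) (hcn : c < n)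
    (hdeg : ∀ v, c ≤ G.degree v) (hsq : (n : ℝ) * Real.log n ≤ (c : ℝ) ^ 2) :
    ∃ T : Finset (Fin n), T.card ≤ c ∧ ∀ x, x ∈ T ∨ ∃ t ∈ T, G.Adj t x := by
  classical
  set U : Finset (Fin n) → Finset (Fin n) :=
    fun T => Finset.univ.filter (fun x => x ∉ T ∧ ∀ t ∈ T, ¬ G.Adj t x) with hUdef
  have hnpos : (0 : ℝ) < n := by positivity
  have hcle : (c : ℝ) / n ≤ 1 := by
    rw [div_le_one hnpos]; exact_mod_cast hcn.le
  have hbase : (0:ℝ) ≤ 1 - (c:ℝ)/n := by linarith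
  -- greedy induction
  have main : ∀ k : ℕ, ∃ T : Finset (Fin n), T.card ≤ k ∧
      ((U T).card : ℝ) ≤ (n : ℝ) * (1 - (c : ℝ) / n) ^ k := by
    intro k
    induction k with
    | zero =>
      refine ⟨∅, le_refl _, ?_⟩
      simp only [pow_zero, mul_one]
      have h0 : (U ∅).card ≤ n := by
        simpa using Finset.card_le_univ (U ∅)
      exact_mod_cast h0
    | succ k ih =>
      obtain ⟨T, hTc, hTu⟩ := ih
      by_cases hne : (U T).Nonempty
      · -- averaging: find a good vertex v
        have hub : (U T).card * c ≤ ∑ u ∈ U T, G.degree u := by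
          calc (U T).card * c = ∑ _u ∈ U T, c := by
                rw [Finset.sum_const, smul_eq_mul]
            _ ≤ ∑ u ∈ U T, G.degree u := Finset.sum_le_sum fun u _ => hdeg u
        have hsum : ∑ _v : Fin n, (U T).card * c ≤
            ∑ v : Fin n, n * (G.neighborFinset v ∩ U T).card := by
          calc ∑ _v : Fin n, (U T).card * c = n * ((U T).card * c) := by
                rw [Finset.sum_const, smul_eq_mul, Finset.card_univ, Fintype.card_fin]
            _ ≤ n * ∑ u ∈ U T, G.degree u := Nat.mul_le_mul_left _ hub
            _ = n * ∑ v : Fin n, (G.neighborFinset v ∩ U T).card := by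
                rw [double_count]
            _ = ∑ v : Fin n, n * (G.neighborFinset v ∩ U T).card := by
                rw [Finset.mul_sum]
        have huniv : (Finset.univ : Finset (Fin n)).Nonempty := by
          have : Nonempty (Fin n) := ⟨⟨0, by omega⟩⟩
          exact Finset.univ_nonempty
        obtain ⟨v, -, hv⟩ := Finset.exists_le_of_sum_le huniv hsum
        refine ⟨insert v T, (Finset.card_insert_le _ _).trans (by omega), ?_⟩
        -- U (insert v T) ⊆ U T \ neighborFinset v
        have hsub : U (insert v T) ⊆ U T \ G.neighborFinset v := by
          intro x hx
          simp only [hUdef, Finset.mem_filter, Finset.mem_univ, true_and,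
            Finset.mem_insert, Finset.mem_sdiff, SimpleGraph.mem_neighborFinset] at hx ⊢
          obtain ⟨hx1, hx2⟩ := hx
          exact ⟨⟨fun h => hx1 (Or.inr h), fun t ht => hx2 t (Or.inr ht)⟩,
            hx2 v (Or.inl rfl)⟩
        have hcard : (U (insert v T)).card + (U T ∩ G.neighborFinset v).card
            ≤ (U T).card := by
          have := Finset.card_le_card hsub
          have h2 : (U T \ G.neighborFinset v).card + (U T ∩ G.neighborFinset v).card
              = (U T).card := Finset.card_sdiff_add_card_inter _ _
          omega
        -- convert to reals
        have hvR : ((U T).card : ℝ) * c ≤ (n : ℝ) * ((U T ∩ G.neighborFinset v).card) := by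
          rw [Finset.inter_comm]
          exact_mod_cast hv
        have hstep : ((U (insert v T)).card : ℝ)
            ≤ ((U T).card : ℝ) * (1 - (c : ℝ) / n) := by
          have hR0 : ((U (insert v T)).card : ℝ) + ((U T ∩ G.neighborFinset v).card : ℝ)
              ≤ ((U T).card : ℝ) := by exact_mod_cast hcard
          have hR : ((U (insert v T)).card : ℝ)
              ≤ ((U T).card : ℝ) - ((U T ∩ G.neighborFinset v).card : ℝ) := by linarith
          have : ((U T).card : ℝ) * ((c : ℝ)/n) ≤ ((U T ∩ G.neighborFinset v).card : ℝ) := by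
            rw [show ((U T).card : ℝ) * ((c : ℝ)/n) = ((U T).card : ℝ) * (c : ℝ) / n by ring,
              div_le_iff₀ hnpos]
            linarith [hvR]
          calc ((U (insert v T)).card : ℝ)
              ≤ ((U T).card : ℝ) - ((U T ∩ G.neighborFinset v).card : ℝ) := hR
            _ ≤ ((U T).card : ℝ) - ((U T).card : ℝ) * ((c : ℝ)/n) := by linarith
            _ = ((U T).card : ℝ) * (1 - (c : ℝ)/n) := by ring
        refine hstep.trans ?_
        calc ((U T).card : ℝ) * (1 - (c : ℝ)/n)
            ≤ ((n : ℝ) * (1 - (c : ℝ)/n) ^ k) * (1 - (c : ℝ)/n) :=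
              mul_le_mul_of_nonneg_right hTu hbase
          _ = (n : ℝ) * (1 - (c : ℝ)/n) ^ (k+1) := by ring
      · refine ⟨T, hTc.trans (by omega), ?_⟩
        rw [Finset.not_nonempty_iff_eq_empty] at hne
        rw [hne]
        simp only [Finset.card_empty, Nat.cast_zero]
        positivity
  obtain ⟨T, hTc, hTu⟩ := main c
  have hfinal : ((U T).card : ℝ) < 1 := by
    have hlt : (1 - (c:ℝ)/n) < Real.exp (-(c:ℝ)/n) := by
      have := Real.add_one_lt_exp (x := -(c:ℝ)/n) (by
        have : (0:ℝ) < (c:ℝ)/n := by positivity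
        intro h
        rw [neg_div] at h
        linarith)
      rw [neg_div] at this ⊢
      linarith
    have hpow : (1 - (c:ℝ)/n) ^ c < Real.exp (-(c:ℝ)/n) ^ c :=
      pow_lt_pow_left₀ hlt hbase (by omega)
    have hexp : Real.exp (-(c:ℝ)/n) ^ c ≤ 1 / n := by
      rw [← Real.exp_nat_mul]
      have harg : (c:ℝ) * (-(c:ℝ)/n) ≤ -Real.log n := by
        have h := (le_div_iff₀ hnpos).mpr
          (show Real.log ↑n * ↑n ≤ (c:ℝ)*(c:ℝ) by nlinarith [hsq])
        have heq : (c:ℝ) * (-(c:ℝ)/n) = -((c:ℝ)*(c:ℝ)/n) := by ring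
        rw [heq]
        linarith
      calc Real.exp ((c:ℝ) * (-(c:ℝ)/n)) ≤ Real.exp (-Real.log n) :=
            Real.exp_le_exp.mpr harg
        _ = 1 / n := by rw [Real.exp_neg, Real.exp_log hnpos, one_div]
    calc ((U T).card : ℝ) ≤ (n:ℝ) * (1 - (c:ℝ)/n) ^ c := hTu
      _ < (n:ℝ) * Real.exp (-(c:ℝ)/n) ^ c := by
          exact mul_lt_mul_of_pos_left hpow hnpos
      _ ≤ (n:ℝ) * (1/n) := mul_le_mul_of_nonneg_left hexp hnpos.le
      _ = 1 := by field_simp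
  have hz : (U T).card < 1 := by exact_mod_cast hfinal
  have hUempty : U T = ∅ := Finset.card_eq_zero.mp (by omega)
  refine ⟨T, hTc, fun x => ?_⟩
  by_contra hcon
  push_neg at hcon
  have : x ∈ U T := by
    simp only [hUdef, Finset.mem_filter, Finset.mem_univ, true_and]
    exact ⟨hcon.1, fun t ht ha => hcon.2 t ht ha⟩
  rw [hUempty] at this
  exact absurd this (Finset.notMem_empty x)

/-- If every vertex of a graph on `n ≥ 2` vertices has degree greater than
`√(n log n)`, then for every vertex `w` there is a set `T` of at most
`⌈√(n log n)⌉` vertices such that adding the edges from `w` to `T` puts every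
vertex within distance 2 of `w`. -/
theorem stmt6 {n : ℕ} (hn : 2 ≤ n) (G : SimpleGraph (Fin n)) [DecidableRel G.Adj]
    (hdeg : ∀ v : Fin n, Real.sqrt (n * Real.log n) < (G.degree v : ℝ))
    (w : Fin n) :
    ∃ T : Finset (Fin n),
      (T.card : ℤ) ≤ ⌈Real.sqrt (n * Real.log n)⌉ ∧
      ∀ x : Fin n,
        (G ⊔ SimpleGraph.fromEdgeSet {e | ∃ t ∈ T, e = s(w, t)}).edist w x ≤ 2 := by
  classical
  set r : ℝ := Real.sqrt (n * Real.log n) with hr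
  have hn1 : (1:ℝ) < n := by exact_mod_cast (by omega : 1 < n)
  have hrpos : 0 < r := Real.sqrt_pos.mpr (by
    have := Real.log_pos hn1
    positivity)
  set c : ℕ := ⌈r⌉₊ with hc
  have hc1 : 1 ≤ c := Nat.ceil_pos.mpr hrpos
  have hdeg' : ∀ v, c ≤ G.degree v := fun v => Nat.ceil_le.mpr (hdeg v).le
  have hcn : c < n := lt_of_le_of_lt (hdeg' w)
    (by simpa using G.degree_lt_card_verts w)
  have hsq : (n : ℝ) * Real.log n ≤ (c : ℝ) ^ 2 := by
    have h1 : r ≤ (c:ℝ) := Nat.le_ceil r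
    have h2 : r ^ 2 = (n:ℝ) * Real.log n := Real.sq_sqrt (by positivity)
    calc (n : ℝ) * Real.log n = r ^ 2 := h2.symm
      _ ≤ (c:ℝ)^2 := pow_le_pow_left₀ hrpos.le h1 2
  obtain ⟨T, hTc, hdom⟩ := exists_dominating hn G hc1 hcn hdeg' hsq
  refine ⟨T, ?_, ?_⟩
  · have : (c : ℤ) = ⌈r⌉ := Int.natCast_ceil_eq_ceil hrpos.le
    rw [← this]
    exact_mod_cast hTc
  · intro x
    set G' := G ⊔ SimpleGraph.fromEdgeSet {e | ∃ t ∈ T, e = s(w, t)} with hG'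
    by_cases hxw : x = w
    · subst hxw; simp [SimpleGraph.edist_self]
    have hadjT : ∀ t ∈ T, t ≠ w → G'.Adj w t := by
      intro t ht htw
      apply (SimpleGraph.sup_adj _ _ _ _).mpr
      right
      rw [SimpleGraph.fromEdgeSet_adj]
      exact ⟨⟨t, ht, rfl⟩, (Ne.symm htw)⟩
    rcases hdom x with hxT | ⟨t, htT, hadj⟩
    · have : G'.Adj w x := hadjT x hxT (fun h => hxw h)
      calc G'.edist w x = 1 := SimpleGraph.edist_eq_one_iff_adj.mpr this
        _ ≤ 2 := by norm_num
    · by_cases htw : t = w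
      · rw [htw] at hadj
        have : G'.Adj w x := (SimpleGraph.sup_adj _ _ _ _).mpr (Or.inl hadj)
        calc G'.edist w x = 1 := SimpleGraph.edist_eq_one_iff_adj.mpr this
          _ ≤ 2 := by norm_num
      · have h1 : G'.edist w t = 1 :=
          SimpleGraph.edist_eq_one_iff_adj.mpr (hadjT t htT htw)
        have h2 : G'.edist t x = 1 :=
          SimpleGraph.edist_eq_one_iff_adj.mpr ((SimpleGraph.sup_adj _ _ _ _).mpr (Or.inl hadj))
        calc G'.edist w x ≤ G'.edist w t + G'.edist t x := SimpleGraph.edist_triangle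
          _ = 2 := by rw [h1, h2]; rfl
end

section
/- For integer α ≥ 2, the following strategy profile on n = αk vertices is a (weak) Nash equilibrium of the network creation game: vertices v_1,…,v_k form a clique with each edge bought by one arbitrary endpoint, and each v_i additionally buys edges to α−1 private leaves l_{i,1},…,l_{i,α−1}; no leaf buys any edge. -/
open scoped ENNReal

private lemma my_one_le_edist {V : Type*} {G : SimpleGraph V} {v w : V} (h : v ≠ w) :
    1 ≤ G.edist v w :=
  Order.one_le_iff_pos.mpr (G.edist_pos_of_ne h)

private lemma my_two_le_edist {V : Type*} {G : SimpleGraph V} {v w : V} (h : v ≠ w)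
    (hna : ¬ G.Adj v w) : 2 ≤ G.edist v w := by
  by_contra hlt
  push_neg at hlt
  have hne : G.edist v w ≠ ⊤ := ne_top_of_lt hlt
  have h1 : 1 ≤ G.edist v w := my_one_le_edist h
  have hadj : G.edist v w = 1 := by
    lift G.edist v w to ℕ using hne with n hn
    norm_cast at hlt h1 ⊢
    omega
  exact hna (SimpleGraph.edist_eq_one_iff_adj.mp hadj)

private lemma edist_unique_nbr {V : Type*} {G : SimpleGraph V} {v w u : V} (hvw : v ≠ w)
    (hu : ∀ x, G.Adj w x → x = u) : G.edist v u + 1 ≤ G.edist v w := by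
  rcases eq_or_ne (G.edist v w) ⊤ with ht | ht
  · exact ht ▸ le_top
  · rw [SimpleGraph.edist_comm] at ht
    obtain ⟨p, hp⟩ := SimpleGraph.exists_walk_of_edist_ne_top ht
    cases p with
    | nil => exact absurd rfl hvw.symm
    | @cons _ x _ h q =>
      obtain rfl := hu _ h
      have e2 : G.edist v w = G.edist w v := SimpleGraph.edist_comm
      rw [e2, ← hp]
      have hq : G.edist v _ ≤ q.length := SimpleGraph.edist_comm ▸ SimpleGraph.edist_le q
      calc G.edist v _ + 1 ≤ (q.length : ℕ∞) + 1 := add_le_add_left hq 1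
        _ = ((SimpleGraph.Walk.cons h q).length : ℕ∞) := by
            rw [SimpleGraph.Walk.length_cons]; push_cast; ring

private lemma edist_isolated {V : Type*} {G : SimpleGraph V} {v w : V} (hvw : v ≠ w)
    (hw : ∀ x, ¬ G.Adj w x) : G.edist v w = ⊤ := by
  apply SimpleGraph.edist_eq_top_of_not_reachable
  intro hr
  obtain ⟨p⟩ := hr.symm
  cases p with
  | nil => exact hvw rfl
  | cons h q => exact hw _ h

/-- For integer `α ≥ 2`, the clique-with-leaves strategy profile on `n = αk`
vertices is a (weak) Nash equilibrium: the clique vertices `(i, 0)` form a clique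
with each edge bought by exactly one endpoint, each `(i, 0)` buys the edges to its
`α - 1` private leaves `(i, j)` (`j ≠ 0`), and no leaf buys any edge. -/
theorem stmt12 (a k : ℕ) [NeZero a] (ha : 2 ≤ a) (hk : 2 ≤ k)
    (S : Fin k × Fin a → Finset (Fin k × Fin a))
    (hleaf : ∀ i : Fin k, ∀ j : Fin a, j ≠ 0 → S (i, j) = ∅)
    (hbuyleaf : ∀ i : Fin k, ∀ j : Fin a, j ≠ 0 → (i, j) ∈ S (i, 0))
    (hcliqueS : ∀ i : Fin k, ∀ p ∈ S (i, 0),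
      (p.1 = i ∧ p.2 ≠ 0) ∨ (p.2 = 0 ∧ p.1 ≠ i))
    (horient : ∀ i i' : Fin k, i ≠ i' →
      ((i', (0 : Fin a)) ∈ S (i, 0) ↔ (i, (0 : Fin a)) ∉ S (i', 0))) :
    IsNash (a : ℝ) S := by
  classical
  intro v T hvT
  obtain ⟨i, j₀⟩ := v
  set S' : Fin k × Fin a → Finset (Fin k × Fin a) := Function.update S (i, j₀) T with hS'def
  have hS'v : S' (i, j₀) = T := Function.update_self (i, j₀) T S
  have hS'ne : ∀ u, u ≠ (i, j₀) → S' u = S u := fun u hu => Function.update_of_ne hu T S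
  -- unique neighbor of a leaf in the deviated graph
  have hleafnbr : ∀ (i' : Fin k) (j : Fin a), j ≠ 0 → (i', j) ≠ (i, j₀) → (i', j) ∉ T →
      ∀ x, (netGraph S').Adj (i', j) x → x = (i', 0) := by
    intro i' j hj hnev hnT x hadj
    obtain ⟨hne, hor⟩ := hadj
    rcases hor with hx | hx
    · rw [hS'ne _ hnev, hleaf i' j hj] at hx
      exact absurd hx (Finset.notMem_empty x)
    · by_cases hxv : x = (i, j₀)
      · rw [hxv, hS'v] at hx; exact absurd hx hnT
      · rw [hS'ne _ hxv] at hx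
        obtain ⟨x1, x2⟩ := x
        by_cases hx2 : x2 = 0
        · subst hx2
          rcases hcliqueS x1 _ hx with ⟨h1, _⟩ | ⟨h2, _⟩
          · rw [show x1 = i' from h1.symm]
          · exact absurd h2 hj
        · rw [hleaf x1 x2 hx2] at hx; exact absurd hx (Finset.notMem_empty _)
  -- adjacency in the original graph
  have hadjcc : ∀ i₁ i₂ : Fin k, i₁ ≠ i₂ → (netGraph S).Adj (i₁, 0) (i₂, 0) := by
    intro i₁ i₂ hne
    refine ⟨by simp [Prod.ext_iff, hne], ?_⟩
    by_cases hm : ((i₂, (0 : Fin a)) ∈ S (i₁, 0))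
    · exact Or.inl hm
    · refine Or.inr (by_contra fun hc => hm ((horient i₁ i₂ hne).mpr hc))
  have hadjcl : ∀ i₁ : Fin k, ∀ j : Fin a, j ≠ 0 → (netGraph S).Adj (i₁, 0) (i₁, j) := by
    intro i₁ j hj
    exact ⟨by simp [Prod.ext_iff, Ne.symm hj], Or.inl (hbuyleaf i₁ j hj)⟩
  -- cost rewriting
  have hcost : ∀ (R : Fin k × Fin a → Finset (Fin k × Fin a)),
      netCost (a : ℝ) R (i, j₀) = ∑ i' : Fin k, ∑ j : Fin a,
        ((if (i', j) ∈ R (i, j₀) then (a : ℝ≥0∞) else 0)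
          + ((netGraph R).edist (i, j₀) (i', j) : ℝ≥0∞)) := by
    intro R
    have h1 : ∑ p : Fin k × Fin a, (if p ∈ R (i, j₀) then (a : ℝ≥0∞) else 0)
        = ENNReal.ofReal (a : ℝ) * (R (i, j₀)).card := by
      rw [Finset.sum_ite_mem, Finset.univ_inter, Finset.sum_const, nsmul_eq_mul,
        ENNReal.ofReal_natCast, mul_comm]
    rw [netCost, ← h1, ← Finset.sum_add_distrib, Fintype.sum_prod_type]
  -- generic lower bounds for terms of the new cost
  have h2a : (2:ℝ≥0∞) ≤ (a:ℝ≥0∞) := by exact_mod_cast ha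
  have hnew2 : ∀ (i' : Fin k) (j : Fin a), j ≠ 0 → (i', j) ≠ (i, j₀) → (i, j₀) ≠ (i', 0) →
      (2:ℝ≥0∞) ≤ (if (i',j) ∈ T then (a:ℝ≥0∞) else 0)
        + ((netGraph S').edist (i,j₀) (i',j) : ℝ≥0∞) := by
    intro i' j hj hne1 hne0
    by_cases hjT : (i',j) ∈ T
    · rw [if_pos hjT]
      exact h2a.trans le_self_add
    · rw [if_neg hjT, zero_add]
      have h1 : (1:ℕ∞) ≤ (netGraph S').edist (i,j₀) (i',0) := my_one_le_edist hne0
      have hstep := edist_unique_nbr (G := netGraph S') (Ne.symm hne1) (hleafnbr i' j hj hne1 hjT)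
      have h2 : (2:ℕ∞) ≤ (netGraph S').edist (i,j₀) (i',j) := by
        refine le_trans ?_ hstep
        rw [← one_add_one_eq_two]
        exact add_le_add_left h1 1
      exact_mod_cast h2
  have hnew3 : ∀ (i' : Fin k) (j : Fin a), j ≠ 0 → (i', j) ≠ (i, j₀) →
      (2:ℕ∞) ≤ (netGraph S').edist (i,j₀) (i',0) →
      (3:ℝ≥0∞) ≤ (if (i',j) ∈ T then (a:ℝ≥0∞) else 0)
        + ((netGraph S').edist (i,j₀) (i',j) : ℝ≥0∞) := by
    intro i' j hj hne1 h2
    by_cases hjT : (i',j) ∈ T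
    · rw [if_pos hjT]
      have h3a : (3:ℝ≥0∞) ≤ (a:ℝ≥0∞) + 1 := by
        calc (3:ℝ≥0∞) = 2 + 1 := by norm_num
          _ ≤ _ := add_le_add_left h2a 1
      refine h3a.trans (add_le_add_right ?_ _)
      exact_mod_cast my_one_le_edist (Ne.symm hne1)
    · rw [if_neg hjT, zero_add]
      have hstep := edist_unique_nbr (G := netGraph S') (Ne.symm hne1) (hleafnbr i' j hj hne1 hjT)
      have h3 : (3:ℕ∞) ≤ (netGraph S').edist (i,j₀) (i',j) := by
        refine le_trans ?_ hstep
        rw [show (3:ℕ∞) = 2 + 1 by norm_num]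
        exact add_le_add_left h2 1
      exact_mod_cast h3
  by_cases hj₀ : j₀ = 0
  · -- CASE A : the deviator is a clique vertex
    subst hj₀
    by_cases hful : ∀ j : Fin a, j ≠ 0 → (i, j) ∈ T
    · -- main case : all own leaves are kept
      rw [hcost S, hcost S']
      simp only [hS'v]
      refine Finset.sum_le_sum fun i' _ => ?_
      by_cases hi' : i' = i
      · -- own clique : termwise
        subst hi'
        refine Finset.sum_le_sum fun j _ => ?_
        by_cases hj : j = 0
        · subst hj
          have hvS : ((i', (0:Fin a))) ∉ S (i', 0) := by
            intro h
            rcases hcliqueS i' _ h with ⟨_, h2⟩ | ⟨_, h2⟩ <;> exact h2 rfl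
          rw [if_neg hvS, if_neg hvT, SimpleGraph.edist_self]
          refine le_trans (le_of_eq ?_) zero_le
          simp
        · rw [if_pos (hbuyleaf i' j hj), if_pos (hful j hj)]
          refine add_le_add le_rfl ?_
          have h1 : (netGraph S).edist (i',0) (i',j) ≤ 1 :=
            (SimpleGraph.edist_eq_one_iff_adj.mpr (hadjcl i' j hj)).le
          have h2 : (1:ℕ∞) ≤ (netGraph S').edist (i',0) (i',j) :=
            my_one_le_edist (by simp [Prod.ext_iff, Ne.symm hj])
          calc ((netGraph S).edist (i',0) (i',j) : ℝ≥0∞) ≤ ((1:ℕ∞):ℝ≥0∞) := by exact_mod_cast h1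
            _ ≤ _ := by exact_mod_cast h2
      · -- other cliques
        have hii' : i ≠ i' := fun h => hi' h.symm
        have hnev : ((i':Fin k), (0:Fin a)) ≠ (i, 0) := by simp [Prod.ext_iff, hi']
        have hvnew : ((i:Fin k), (0:Fin a)) ≠ (i', 0) := by simp [Prod.ext_iff, hii']
        have hdc : (netGraph S).edist (i,0) (i',0) ≤ 1 :=
          (SimpleGraph.edist_eq_one_iff_adj.mpr (hadjcc i i' hii')).le
        have hdl : ∀ j : Fin a, j ≠ 0 → (netGraph S).edist (i,0) (i',j) ≤ 2 := by
          intro j hj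
          calc (netGraph S).edist (i,0) (i',j)
              ≤ (netGraph S).edist (i,0) (i',0) + (netGraph S).edist (i',0) (i',j) :=
                SimpleGraph.edist_triangle
            _ ≤ 1 + 1 := add_le_add hdc (SimpleGraph.edist_eq_one_iff_adj.mpr (hadjcl i' j hj)).le
            _ = 2 := one_add_one_eq_two
        have hnotSleaf : ∀ j : Fin a, j ≠ 0 → ((i', j)) ∉ S (i,0) := by
          intro j hj h
          rcases hcliqueS i _ h with ⟨h1, _⟩ | ⟨h2, _⟩
          · exact hi' h1
          · exact hj h2
        have holdleaf : ∀ j ∈ Finset.univ.erase (0 : Fin a),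
            (if (i', j) ∈ S (i,0) then (a:ℝ≥0∞) else 0)
              + ((netGraph S).edist (i,0) (i',j) : ℝ≥0∞) ≤ 2 := by
          intro j hj
          rw [if_neg (hnotSleaf j (Finset.ne_of_mem_erase hj)), zero_add]
          exact_mod_cast hdl j (Finset.ne_of_mem_erase hj)
        have hd'c1 : (1:ℕ∞) ≤ (netGraph S').edist (i,0) (i',0) := my_one_le_edist hvnew
        have hleafne : ∀ j : Fin a, ((i':Fin k), j) ≠ (i, 0) := by
          intro j; simp [Prod.ext_iff, hi']
        rw [← Finset.add_sum_erase _ _ (Finset.mem_univ (0 : Fin a)),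
            ← Finset.add_sum_erase _
              (fun j => (if (i', j) ∈ T then (a:ℝ≥0∞) else 0)
                + ((netGraph S').edist (i,0) (i',j) : ℝ≥0∞)) (Finset.mem_univ (0 : Fin a))]
        by_cases hct : ((i', (0:Fin a)) ∈ T)
        · refine add_le_add ?_ ?_
          · rw [if_pos hct]
            have hhead : (if (i',(0:Fin a)) ∈ S (i,0) then (a:ℝ≥0∞) else 0)
                + ((netGraph S).edist (i,0) (i',0) : ℝ≥0∞) ≤ (a:ℝ≥0∞) + 1 := by
              refine add_le_add ?_ ?_
              · split <;> simp
              · exact_mod_cast hdc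
            refine hhead.trans (add_le_add le_rfl ?_)
            exact_mod_cast hd'c1
          · refine le_trans (Finset.sum_le_sum holdleaf) (Finset.sum_le_sum ?_)
            intro j hj
            exact hnew2 i' j (Finset.ne_of_mem_erase hj) (hleafne j) hvnew
        · by_cases hC : ((i', (0:Fin a)) ∈ S (i, 0))
          · -- v bought the clique edge and dropped it
            have hnadj : ¬ (netGraph S').Adj (i,0) (i',0) := by
              rintro ⟨hne, hor | hor⟩
              · rw [hS'v] at hor; exact hct hor
              · rw [hS'ne _ hnev] at hor
                exact (horient i i' hii').mp hC hor
            have hd'c2 : (2:ℕ∞) ≤ (netGraph S').edist (i,0) (i',0) :=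
              my_two_le_edist hvnew hnadj
            calc (if (i',(0:Fin a)) ∈ S (i,0) then (a:ℝ≥0∞) else 0)
                  + ((netGraph S).edist (i,0) (i',0) : ℝ≥0∞)
                  + ∑ j ∈ Finset.univ.erase (0:Fin a),
                    ((if (i', j) ∈ S (i,0) then (a:ℝ≥0∞) else 0)
                      + ((netGraph S).edist (i,0) (i',j) : ℝ≥0∞))
                ≤ ((a:ℝ≥0∞) + 1) + ∑ _j ∈ Finset.univ.erase (0:Fin a), (2:ℝ≥0∞) := by
                  refine add_le_add (add_le_add (by split <;> simp) ?_) (Finset.sum_le_sum holdleaf)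
                  exact_mod_cast hdc
              _ = 2 + ∑ _j ∈ Finset.univ.erase (0:Fin a), (3:ℝ≥0∞) := by
                  rw [Finset.sum_const, Finset.sum_const]
                  have hcard : (Finset.univ.erase (0:Fin a)).card = a - 1 := by
                    rw [Finset.card_erase_of_mem (Finset.mem_univ _), Finset.card_univ,
                      Fintype.card_fin]
                  rw [hcard]
                  obtain ⟨m, hm⟩ : ∃ m, a = m + 2 := ⟨a - 2, by omega⟩
                  have hm1 : a - 1 = m + 1 := by omega
                  rw [hm1, hm]
                  simp only [nsmul_eq_mul]
                  push_cast
                  ring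
              _ ≤ _ := by
                  refine add_le_add ?_ (Finset.sum_le_sum ?_)
                  · refine le_trans ?_ le_add_self
                    exact_mod_cast hd'c2
                  · intro j hj
                    exact hnew3 i' j (Finset.ne_of_mem_erase hj) (hleafne j) hd'c2
          · -- the other endpoint owns the clique edge
            refine add_le_add ?_ ?_
            · rw [if_neg hC, zero_add]
              have h1 : ((netGraph S).edist (i,0) (i',0) : ℝ≥0∞) ≤ 1 := by exact_mod_cast hdc
              refine h1.trans (le_trans ?_ le_add_self)
              exact_mod_cast hd'c1
            · refine le_trans (Finset.sum_le_sum holdleaf) (Finset.sum_le_sum ?_)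
              intro j hj
              exact hnew2 i' j (Finset.ne_of_mem_erase hj) (hleafne j) hvnew
    · -- degenerate case : some own leaf was dropped, new cost is infinite
      push_neg at hful
      obtain ⟨j, hj, hjT⟩ := hful
      have hne : ((i:Fin k), j) ≠ (i, 0) := by simp [Prod.ext_iff, hj]
      have hiso : ∀ x, ¬ (netGraph S').Adj (i, j) x := by
        intro x hadj
        have hx := hleafnbr i j hj hne hjT x hadj
        subst hx
        obtain ⟨hne2, hor | hor⟩ := hadj
        · rw [hS'ne _ hne, hleaf i j hj] at hor
          exact absurd hor (Finset.notMem_empty _)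
        · rw [hS'v] at hor; exact hjT hor
      have htop : ((netGraph S').edist (i,0) (i,j) : ℝ≥0∞) = ⊤ := by
        rw [edist_isolated (Ne.symm hne) hiso]; rfl
      have hcosttop : netCost (a:ℝ) S' (i,0) = ⊤ := by
        rw [netCost, ENNReal.add_eq_top]
        right
        rw [ENNReal.sum_eq_top]
        exact ⟨(i,j), Finset.mem_univ _, htop⟩
      rw [hcosttop]; exact le_top
  · -- CASE B : the deviator is a leaf
    
    have hSv : S (i, j₀) = ∅ := hleaf i j₀ hj₀
    have hadjv0 : (netGraph S).Adj (i, j₀) (i, 0) := (hadjcl i j₀ hj₀).symm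
    have hd0 : (netGraph S).edist (i,j₀) (i,0) ≤ 1 :=
      (SimpleGraph.edist_eq_one_iff_adj.mpr hadjv0).le
    have hne_v0 : ((i:Fin k), j₀) ≠ (i, 0) := by simp [Prod.ext_iff, hj₀]
    rw [hcost S, hcost S']
    simp only [hS'v, hSv, Finset.notMem_empty, if_false, zero_add]
    refine Finset.sum_le_sum fun i' _ => ?_
    by_cases hi' : i' = i
    · -- own clique
      subst hi'
      have hj₀mem : j₀ ∈ Finset.univ.erase (0:Fin a) :=
        Finset.mem_erase.mpr ⟨hj₀, Finset.mem_univ _⟩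
      rw [← Finset.add_sum_erase _ _ (Finset.mem_univ (0 : Fin a)),
          ← Finset.add_sum_erase _ (fun j => (if (i', j) ∈ T then (a:ℝ≥0∞) else 0)
            + ((netGraph S').edist (i',j₀) (i',j) : ℝ≥0∞)) (Finset.mem_univ (0 : Fin a)),
          ← Finset.add_sum_erase _ _ hj₀mem,
          ← Finset.add_sum_erase _ (fun j => (if (i', j) ∈ T then (a:ℝ≥0∞) else 0)
            + ((netGraph S').edist (i',j₀) (i',j) : ℝ≥0∞)) hj₀mem]
      refine add_le_add ?_ (add_le_add ?_ (Finset.sum_le_sum ?_))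
      · -- the center
        have h1 : ((netGraph S).edist (i',j₀) (i',0) : ℝ≥0∞) ≤ 1 := by exact_mod_cast hd0
        refine h1.trans (le_trans ?_ le_add_self)
        exact_mod_cast my_one_le_edist hne_v0
      · -- the deviating leaf itself
        simp [SimpleGraph.edist_self]
      · -- the sibling leaves
        intro j hj
        obtain ⟨hjj₀, hj0⟩ : j ≠ j₀ ∧ j ≠ 0 := by
          have h1 := Finset.mem_erase.mp hj
          exact ⟨h1.1, Finset.ne_of_mem_erase h1.2⟩
        have hold2 : (netGraph S).edist (i',j₀) (i',j) ≤ 2 := by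
          calc (netGraph S).edist (i',j₀) (i',j)
              ≤ (netGraph S).edist (i',j₀) (i',0) + (netGraph S).edist (i',0) (i',j) :=
                SimpleGraph.edist_triangle
            _ ≤ 1 + 1 := add_le_add hd0 (SimpleGraph.edist_eq_one_iff_adj.mpr (hadjcl i' j hj0)).le
            _ = 2 := one_add_one_eq_two
        refine le_trans (show ((netGraph S).edist (i',j₀) (i',j) : ℝ≥0∞) ≤ 2 by
          exact_mod_cast hold2) ?_
        exact hnew2 i' j hj0 (by simp [Prod.ext_iff, hjj₀]) hne_v0
    · -- other cliques
      have hii' : i ≠ i' := fun h => hi' h.symm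
      have hne0 : ((i:Fin k), j₀) ≠ (i', 0) := by simp [Prod.ext_iff, hii']
      have hnev' : ((i':Fin k), (0:Fin a)) ≠ (i, j₀) := by simp [Prod.ext_iff, hi']
      have hleafne : ∀ j : Fin a, ((i':Fin k), j) ≠ (i, j₀) := by
        intro j; simp [Prod.ext_iff, hi']
      have hdc2 : (netGraph S).edist (i,j₀) (i',0) ≤ 2 := by
        calc (netGraph S).edist (i,j₀) (i',0)
            ≤ (netGraph S).edist (i,j₀) (i,0) + (netGraph S).edist (i,0) (i',0) :=
              SimpleGraph.edist_triangle
          _ ≤ 1 + 1 := add_le_add hd0 (SimpleGraph.edist_eq_one_iff_adj.mpr (hadjcc i i' hii')).le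
          _ = 2 := one_add_one_eq_two
      have hdl3 : ∀ j : Fin a, j ≠ 0 → (netGraph S).edist (i,j₀) (i',j) ≤ 3 := by
        intro j hj
        calc (netGraph S).edist (i,j₀) (i',j)
            ≤ (netGraph S).edist (i,j₀) (i',0) + (netGraph S).edist (i',0) (i',j) :=
              SimpleGraph.edist_triangle
          _ ≤ 2 + 1 := add_le_add hdc2 (SimpleGraph.edist_eq_one_iff_adj.mpr (hadjcl i' j hj)).le
          _ = 3 := by norm_num
      have holdleaf : ∀ j ∈ Finset.univ.erase (0:Fin a),
          ((netGraph S).edist (i,j₀) (i',j) : ℝ≥0∞) ≤ 3 := by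
        intro j hj
        exact_mod_cast hdl3 j (Finset.ne_of_mem_erase hj)
      rw [← Finset.add_sum_erase _ _ (Finset.mem_univ (0 : Fin a)),
          ← Finset.add_sum_erase _ (fun j => (if (i', j) ∈ T then (a:ℝ≥0∞) else 0)
            + ((netGraph S').edist (i,j₀) (i',j) : ℝ≥0∞)) (Finset.mem_univ (0 : Fin a))]
      by_cases hct : ((i', (0:Fin a)) ∈ T)
      · calc ((netGraph S).edist (i,j₀) (i',0) : ℝ≥0∞)
              + ∑ j ∈ Finset.univ.erase (0:Fin a), ((netGraph S).edist (i,j₀) (i',j) : ℝ≥0∞)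
            ≤ 2 + ∑ _j ∈ Finset.univ.erase (0:Fin a), (3:ℝ≥0∞) := by
              refine add_le_add ?_ (Finset.sum_le_sum holdleaf)
              exact_mod_cast hdc2
          _ = ((a:ℝ≥0∞) + 1) + ∑ _j ∈ Finset.univ.erase (0:Fin a), (2:ℝ≥0∞) := by
              rw [Finset.sum_const, Finset.sum_const]
              have hcard : (Finset.univ.erase (0:Fin a)).card = a - 1 := by
                rw [Finset.card_erase_of_mem (Finset.mem_univ _), Finset.card_univ,
                  Fintype.card_fin]
              rw [hcard]
              obtain ⟨m, hm⟩ : ∃ m, a = m + 2 := ⟨a - 2, by omega⟩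
              have hm1 : a - 1 = m + 1 := by omega
              rw [hm1, hm]
              simp only [nsmul_eq_mul]
              push_cast
              ring
          _ ≤ _ := by
              refine add_le_add ?_ (Finset.sum_le_sum ?_)
              · rw [if_pos hct]
                refine add_le_add le_rfl ?_
                exact_mod_cast my_one_le_edist hne0
              · intro j hj
                exact hnew2 i' j (Finset.ne_of_mem_erase hj) (hleafne j) hne0
      · have hnadj : ¬ (netGraph S').Adj (i,j₀) (i',0) := by
          rintro ⟨hne, hor | hor⟩
          · rw [hS'v] at hor; exact hct hor
          · rw [hS'ne _ hnev'] at hor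
            rcases hcliqueS i' _ hor with ⟨h1, _⟩ | ⟨h2, _⟩
            · exact hii' h1
            · exact hj₀ h2
        have hd2 : (2:ℕ∞) ≤ (netGraph S').edist (i,j₀) (i',0) := my_two_le_edist hne0 hnadj
        refine add_le_add ?_ ?_
        · refine le_trans (show ((netGraph S).edist (i,j₀) (i',0) : ℝ≥0∞) ≤ 2 by
            exact_mod_cast hdc2) (le_trans ?_ le_add_self)
          exact_mod_cast hd2
        · refine le_trans (Finset.sum_le_sum holdleaf) (Finset.sum_le_sum ?_)
          intro j hj
          exact hnew3 i' j (Finset.ne_of_mem_erase hj) (hleafne j) hd2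
end

section
/- In the clique-with-leaves graph for integer α ≥ 2 (a k-clique where each clique vertex has α−1 pendant leaves), a leaf cannot strictly decrease its cost by buying any single additional edge: buying an edge to a clique vertex or to another leaf decreases its total distance sum by at most α. -/
open scoped ENNReal
open SimpleGraph

lemma two_le_dist' {V : Type*} {G : SimpleGraph V} {x w : V}
    (hr : G.Reachable x w) (hne : x ≠ w) (hadj : ¬ G.Adj x w) : 2 ≤ G.dist x w := by
  have h0 := hr.pos_dist_of_ne hne
  have h1 : G.dist x w ≠ 1 := fun h => hadj (dist_eq_one_iff_adj.mp h)
  omega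

lemma three_le_dist' {V : Type*} {G : SimpleGraph V} {x w : V}
    (hr : G.Reachable x w) (hne : x ≠ w) (hadj : ¬ G.Adj x w)
    (hmid : ∀ z, ¬ (G.Adj x z ∧ G.Adj z w)) : 3 ≤ G.dist x w := by
  have h2 := two_le_dist' hr hne hadj
  have h3 : G.dist x w ≠ 2 := by
    intro h
    obtain ⟨p, hp⟩ := hr.exists_walk_length_eq_dist
    rw [h] at hp
    cases p with
    | nil => simp at hp
    | cons hadj' q =>
      simp only [Walk.length_cons] at hp
      exact hmid _ ⟨hadj', q.adj_of_length_eq_one (by omega)⟩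
  omega

/-- The clique-with-leaves graph: vertices `(i, 0)` form a `k`-clique, and for each
`i` the vertices `(i, j)` with `j ≠ 0` are pendant leaves attached to `(i, 0)`. -/
def cliqueLeaves (k a : ℕ) [NeZero a] : SimpleGraph (Fin k × Fin a) where
  Adj p q := p ≠ q ∧ ((p.2 = 0 ∧ q.2 = 0) ∨ (p.1 = q.1 ∧ (p.2 = 0 ∨ q.2 = 0)))
  symm := ⟨fun p q h => ⟨h.1.symm, by tauto⟩⟩
  loopless := ⟨fun p h => h.1 rfl⟩

section helpers

variable {k a : ℕ} [NeZero a]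

lemma cl_adj (p q : Fin k × Fin a) :
    (cliqueLeaves k a).Adj p q ↔
      p ≠ q ∧ ((p.2 = 0 ∧ q.2 = 0) ∨ (p.1 = q.1 ∧ (p.2 = 0 ∨ q.2 = 0))) := Iff.rfl

lemma cl_leaf_adj {p : Fin k × Fin a} (hp : p.2 ≠ 0) (w : Fin k × Fin a) :
    (cliqueLeaves k a).Adj p w ↔ w = (p.1, 0) := by
  rw [cl_adj]
  constructor
  · rintro ⟨hne, (⟨h1, h2⟩ | ⟨h1, h2 | h2⟩)⟩
    · exact absurd h1 hp
    · exact absurd h2 hp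
    · exact Prod.ext h1.symm h2
  · rintro rfl
    exact ⟨fun h => hp (congrArg Prod.snd h), Or.inr ⟨rfl, Or.inr rfl⟩⟩

lemma cl_reach (p q : Fin k × Fin a) : (cliqueLeaves k a).Reachable p q := by
  have step : ∀ r : Fin k × Fin a, (cliqueLeaves k a).Reachable r (r.1, 0) := by
    intro r
    by_cases h : r.2 = 0
    · rw [show r = (r.1, (0 : Fin a)) from Prod.ext rfl h]
    · exact ((cl_leaf_adj h (r.1, 0)).mpr rfl).reachable
  have mid : (cliqueLeaves k a).Reachable (p.1, 0) (q.1, 0) := by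
    by_cases h : p.1 = q.1
    · rw [h]
    · exact Adj.reachable ⟨fun hc => h (Prod.ext_iff.mp hc).1, Or.inl ⟨rfl, rfl⟩⟩
  exact (step p).trans (mid.trans (step q).symm)

variable {i : Fin k} {j : Fin a}

lemma cl_hAx (hj : j ≠ 0) : (cliqueLeaves k a).Adj (i, j) (i, 0) :=
  (cl_leaf_adj hj _).mpr rfl

lemma cl_ub1 (hj : j ≠ 0) : (cliqueLeaves k a).dist (i, j) (i, 0) ≤ 1 :=
  le_of_eq (dist_eq_one_iff_adj.mpr (cl_hAx hj))

lemma cl_ub2 (hj : j ≠ 0) (w : Fin k × Fin a) (hw : w.1 = i ∨ w.2 = 0) :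
    (cliqueLeaves k a).dist (i, j) w ≤ 2 := by
  by_cases hw0 : w = (i, 0)
  · subst hw0; exact (cl_ub1 hj).trans (by norm_num)
  · have h2 : (cliqueLeaves k a).Adj (i, 0) w := by
      refine ⟨fun h => hw0 h.symm, ?_⟩
      rcases hw with h | h
      · exact Or.inr ⟨h.symm, Or.inl rfl⟩
      · exact Or.inl ⟨rfl, h⟩
    have := SimpleGraph.dist_le (Walk.cons (cl_hAx hj) (Walk.cons h2 Walk.nil))
    simpa using this

lemma cl_ub3 (hj : j ≠ 0) (w : Fin k × Fin a) : (cliqueLeaves k a).dist (i, j) w ≤ 3 := by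
  by_cases hw : w.1 = i ∨ w.2 = 0
  · exact (cl_ub2 hj w hw).trans (by norm_num)
  push_neg at hw
  have h2 : (cliqueLeaves k a).Adj (i, 0) (w.1, 0) :=
    ⟨fun h => hw.1 (Prod.ext_iff.mp h).1.symm, Or.inl ⟨rfl, rfl⟩⟩
  have h3 : (cliqueLeaves k a).Adj (w.1, 0) w :=
    ⟨fun h => hw.2 (Prod.ext_iff.mp h).2.symm, Or.inr ⟨rfl, Or.inl rfl⟩⟩
  have := SimpleGraph.dist_le
    (Walk.cons (cl_hAx hj) (Walk.cons h2 (Walk.cons h3 Walk.nil)))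
  simpa using this

end helpers

/-- In the clique-with-leaves graph, a leaf cannot strictly decrease its cost by
buying a single additional edge: any such edge decreases its total distance sum
by at most `α`. -/
theorem stmt13 (k a : ℕ) [NeZero a] (ha : 2 ≤ a) (hk : 2 ≤ k)
    (i : Fin k) (j : Fin a) (hj : j ≠ 0)
    (u : Fin k × Fin a) (hu : u ≠ (i, j)) :
    ∑ w, (cliqueLeaves k a).dist (i, j) w ≤
      a + ∑ w, ((cliqueLeaves k a) ⊔
        SimpleGraph.fromEdgeSet {s((i, j), u)}).dist (i, j) w := by
  classical
  set G' := cliqueLeaves k a ⊔ SimpleGraph.fromEdgeSet {s(((i, j) : Fin k × Fin a), u)} with hG'def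
  have hxu : ((i, j) : Fin k × Fin a) ≠ u := Ne.symm hu
  have hj2 : ((i, j) : Fin k × Fin a).2 ≠ 0 := hj
  have hG'adj : ∀ p q, G'.Adj p q ↔
      (cliqueLeaves k a).Adj p q ∨ ((p = (i, j) ∧ q = u) ∨ (p = u ∧ q = (i, j))) := by
    intro p q
    rw [hG'def]
    simp only [SimpleGraph.sup_adj, SimpleGraph.fromEdgeSet_adj,
      Set.mem_singleton_iff, Sym2.eq_iff]
    constructor
    · rintro (h | ⟨h, hne⟩)
      · exact Or.inl h
      · exact Or.inr h
    · rintro (h | (⟨rfl, rfl⟩ | ⟨rfl, rfl⟩))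
      · exact Or.inl h
      · exact Or.inr ⟨Or.inl ⟨rfl, rfl⟩, hxu⟩
      · exact Or.inr ⟨Or.inr ⟨rfl, rfl⟩, hxu.symm⟩
  have hNx' : ∀ z, G'.Adj (i, j) z → z = (i, 0) ∨ z = u := by
    intro z h
    rw [hG'adj] at h
    rcases h with h | ⟨_, rfl⟩ | ⟨h, _⟩
    · exact Or.inl ((cl_leaf_adj hj2 z).mp h)
    · exact Or.inr rfl
    · exact absurd h hxu
  have hnadjx : ∀ w, w ≠ (i, 0) → w ≠ u → ¬ G'.Adj (i, j) w := by
    intro w h1 h2 h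
    rcases hNx' w h with h' | h'
    · exact h1 h'
    · exact h2 h'
  have hre : ∀ w, G'.Reachable (i, j) w := fun w => (cl_reach _ _).mono le_sup_left
  have hlb1 : ∀ w, w ≠ (i, j) → 1 ≤ G'.dist (i, j) w :=
    fun w h => (hre w).pos_dist_of_ne (Ne.symm h)
  have hlb2 : ∀ w, w ≠ (i, j) → w ≠ (i, 0) → w ≠ u → 2 ≤ G'.dist (i, j) w :=
    fun w h0 h1 h2 => two_le_dist' (hre w) (Ne.symm h0) (hnadjx w h1 h2)
  have hlb3 : ∀ w, w ≠ (i, j) → w ≠ (i, 0) → w ≠ u →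
      ¬ G'.Adj (i, 0) w → ¬ G'.Adj u w → 3 ≤ G'.dist (i, j) w := by
    intro w h0 h1 h2 h3 h4
    refine three_le_dist' (hre w) (Ne.symm h0) (hnadjx w h1 h2) ?_
    rintro z ⟨hz1, hz2⟩
    rcases hNx' z hz1 with rfl | rfl
    · exact h3 hz2
    · exact h4 hz2
  obtain ⟨ui, uj⟩ := u
  by_cases huj : uj = 0
  · subst huj
    by_cases hui : ui = i
    · -- the edge already exists: G' = G
      have hle : SimpleGraph.fromEdgeSet {s(((i, j) : Fin k × Fin a), (ui, 0))} ≤ cliqueLeaves k a := by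
        intro p q hpq
        rw [SimpleGraph.fromEdgeSet_adj] at hpq
        obtain ⟨heq, -⟩ := hpq
        rw [Set.mem_singleton_iff, Sym2.eq_iff] at heq
        rcases heq with ⟨rfl, rfl⟩ | ⟨rfl, rfl⟩
        · rw [hui]; exact cl_hAx (i := i) hj
        · rw [hui]; exact (cl_hAx (i := i) hj).symm
      have h : G' = cliqueLeaves k a := sup_eq_left.mpr hle
      rw [h]
      exact Nat.le_add_left _ _
    · -- u = (ui, 0), ui ≠ i
      have key : ∀ w : Fin k × Fin a,
          (cliqueLeaves k a).dist (i, j) w ≤ G'.dist (i, j) w + (if w.1 = ui then 1 else 0) := by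
        intro w
        by_cases hw1 : w.1 = ui
        · rw [if_pos hw1]
          by_cases hwu : w = (ui, 0)
          · have h1 := cl_ub2 (i := i) hj w (Or.inr (by rw [hwu]))
            have h2 := hlb1 w (by rw [hwu]; exact hu)
            omega
          · have hwx : w ≠ (i, j) := fun h => hui (by rw [h] at hw1; exact hw1.symm)
            have hw0 : w ≠ (i, 0) := fun h => hui (by rw [h] at hw1; exact hw1.symm)
            have h1 := cl_ub3 (i := i) hj w
            have h2 := hlb2 w hwx hw0 hwu
            omega
        · rw [if_neg hw1, Nat.add_zero]
          by_cases hwx : w = (i, j)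
          · rw [hwx, SimpleGraph.dist_self]; exact Nat.zero_le _
          by_cases hw0 : w = (i, 0)
          · rw [hw0]
            exact (cl_ub1 (i := i) hj).trans (hlb1 _ (by rw [← hw0]; exact hwx))
          by_cases hw2 : w.1 = i ∨ w.2 = 0
          · have hwu : w ≠ (ui, 0) := fun h => hw1 (by rw [h])
            exact (cl_ub2 (i := i) hj w hw2).trans (hlb2 w hwx hw0 hwu)
          push_neg at hw2
          have hwu : w ≠ (ui, 0) := fun h => hw1 (by rw [h])
          refine (cl_ub3 (i := i) hj w).trans (hlb3 w hwx hw0 hwu ?_ ?_)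
          · rw [hG'adj]
            rintro (⟨hne, (⟨-, hc⟩ | ⟨hc, -⟩)⟩ | ⟨hc, -⟩ | ⟨hc, -⟩)
            · exact hw2.2 hc
            · exact hw2.1 hc.symm
            · exact hj ((Prod.ext_iff.mp hc).2).symm
            · exact hui (Prod.ext_iff.mp hc.symm).1
          · rw [hG'adj]
            rintro (⟨hne, (⟨-, hc⟩ | ⟨hc, -⟩)⟩ | ⟨hc, -⟩ | ⟨-, hc⟩)
            · exact hw2.2 hc
            · exact hw1 hc.symm
            · exact hu hc
            · exact hwx hc
      have hsum : ∑ w : Fin k × Fin a, (if w.1 = ui then 1 else 0) = a := by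
        rw [Fintype.sum_prod_type]
        have hin : ∀ x : Fin k, (∑ _y : Fin a, if x = ui then 1 else 0) =
            if x = ui then a else 0 := fun x => by split <;> simp
        rw [Finset.sum_congr rfl fun x _ => hin x]
        simp
      calc ∑ w, (cliqueLeaves k a).dist (i, j) w
          ≤ ∑ w, (G'.dist (i, j) w + (if w.1 = ui then 1 else 0)) :=
            Finset.sum_le_sum fun w _ => key w
        _ = ∑ w, G'.dist (i, j) w + ∑ w : Fin k × Fin a, (if w.1 = ui then 1 else 0) :=
            Finset.sum_add_distrib
        _ = ∑ w, G'.dist (i, j) w + a := by rw [hsum]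
        _ = a + ∑ w, G'.dist (i, j) w := Nat.add_comm _ _
  · -- uj ≠ 0 : u is a leaf
    have hune : ((ui, uj) : Fin k × Fin a).2 ≠ 0 := huj
    set c : ℕ := if ui = i then 1 else 2 with hc
    have key : ∀ w : Fin k × Fin a,
        (cliqueLeaves k a).dist (i, j) w ≤ G'.dist (i, j) w + (if w = (ui, uj) then c else 0) := by
      intro w
      by_cases hwu : w = (ui, uj)
      · rw [if_pos hwu]
        have h2 := hlb1 w (by rw [hwu]; exact hu)
        by_cases hui : ui = i
        · have h1 := cl_ub2 (i := i) hj w (Or.inl (show w.1 = i by rw [hwu, hui]))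
          rw [hc, if_pos hui]
          omega
        · have h1 := cl_ub3 (i := i) hj w
          rw [hc, if_neg hui]
          omega
      · rw [if_neg hwu, Nat.add_zero]
        by_cases hwx : w = (i, j)
        · rw [hwx, SimpleGraph.dist_self]; exact Nat.zero_le _
        by_cases hw0 : w = (i, 0)
        · rw [hw0]
          exact (cl_ub1 (i := i) hj).trans (hlb1 _ (by rw [← hw0]; exact hwx))
        by_cases hw2 : w.1 = i ∨ w.2 = 0
        · exact (cl_ub2 (i := i) hj w hw2).trans (hlb2 w hwx hw0 hwu)
        push_neg at hw2
        refine (cl_ub3 (i := i) hj w).trans (hlb3 w hwx hw0 hwu ?_ ?_)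
        · rw [hG'adj]
          rintro (⟨hne, (⟨-, hcc⟩ | ⟨hcc, -⟩)⟩ | ⟨hcc, -⟩ | ⟨hcc, -⟩)
          · exact hw2.2 hcc
          · exact hw2.1 hcc.symm
          · exact hj ((Prod.ext_iff.mp hcc).2).symm
          · exact huj ((Prod.ext_iff.mp hcc.symm).2)
        · rw [hG'adj]
          rintro (hadj | ⟨hcc, -⟩ | ⟨-, hcc⟩)
          · exact hw2.2 (congrArg Prod.snd ((cl_leaf_adj hune w).mp hadj))
          · exact hu hcc
          · exact hwx hcc
    have hcle : c ≤ a := by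
      rw [hc]
      split <;> omega
    have hsum : ∑ w : Fin k × Fin a, (if w = (ui, uj) then c else 0) = c := by
      simp [Finset.sum_ite_eq']
    calc ∑ w, (cliqueLeaves k a).dist (i, j) w
        ≤ ∑ w, (G'.dist (i, j) w + (if w = (ui, uj) then c else 0)) :=
          Finset.sum_le_sum fun w _ => key w
      _ = ∑ w, G'.dist (i, j) w + ∑ w : Fin k × Fin a, (if w = (ui, uj) then c else 0) :=
          Finset.sum_add_distrib
      _ = ∑ w, G'.dist (i, j) w + c := by rw [hsum]
      _ ≤ a + ∑ w, G'.dist (i, j) w := by omega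
end

section
/- In a connected Nash equilibrium graph of the network creation game with parameter α > 1, for any vertex v, every vertex x at distance at least 3 from v has at most α−1 neighbors among the vertices at distance at least 3 from v. -/
open scoped ENNReal

/-- In a connected Nash equilibrium with `α > 1`, every vertex `x` at distance at
least 3 from `v` has at most `α - 1` neighbors among the vertices at distance at
least 3 from `v`. -/
theorem stmt16 {V : Type*} [Fintype V] [DecidableEq V] (α : ℝ) (hα : 1 < α)
    (S : V → Finset V) (hS : ∀ v, v ∉ S v) (hNash : IsNash α S)
    (hconn : (netGraph S).Connected) (v x : V)
    (hx : 3 ≤ (netGraph S).edist v x) :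
    (({y : V | (netGraph S).Adj x y ∧ 3 ≤ (netGraph S).edist v y}.ncard : ℝ))
      ≤ α - 1 := by
  classical
  set G := netGraph S with hG
  set T : Finset V := insert x (S v) with hT
  set S' := Function.update S v T with hS'
  set G' := netGraph S' with hG'
  have hvx : v ≠ x := by
    rintro rfl
    simp [SimpleGraph.edist_self] at hx
  have hxSv : x ∉ S v := by
    intro h
    have : G.Adj v x := ⟨hvx, Or.inl h⟩
    have h1 : G.edist v x = 1 := SimpleGraph.edist_eq_one_iff_adj.mpr this
    rw [h1] at hx
    exact absurd hx (by decide)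
  have hle : G ≤ G' := by
    intro a b hab
    obtain ⟨hne, hm⟩ := hab
    refine ⟨hne, ?_⟩
    rcases hm with h | h
    · left
      by_cases ha : a = v
      · subst ha; simp [hS', hT, Function.update_self, Finset.mem_insert, h]
      · simp [hS', Function.update_of_ne ha, h]
    · right
      by_cases hb : b = v
      · subst hb; simp [hS', hT, Function.update_self, Finset.mem_insert, h]
      · simp [hS', Function.update_of_ne hb, h]
  have hadj' : G'.Adj v x :=
    ⟨hvx, Or.inl (by simp [hS', hT, Function.update_self])⟩
  have hconn' : G'.Connected := hconn.mono hle
  have hd'x : G'.edist v x = 1 := SimpleGraph.edist_eq_one_iff_adj.mpr hadj'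
  -- neighbors of x in A are at distance ≤ 2 in G'
  have hA2 : ∀ y : V, G.Adj x y → G'.edist v y ≤ 2 := by
    intro y hxy
    have : G'.Adj x y := hle hxy
    have h1 : G'.edist x y = 1 := SimpleGraph.edist_eq_one_iff_adj.mpr this
    calc G'.edist v y ≤ G'.edist v x + G'.edist x y := SimpleGraph.edist_triangle
      _ = 2 := by rw [hd'x, h1]; rfl
  have hfin : ∀ w : V, G'.edist v w ≠ ⊤ := fun w =>
    SimpleGraph.edist_ne_top_iff_reachable.mpr (hconn' v w)
  -- finset A
  set A : Finset V := Finset.univ.filter (fun y => G.Adj x y ∧ 3 ≤ G.edist v y) with hA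
  have hset : {y : V | G.Adj x y ∧ 3 ≤ G.edist v y} = ↑A := by
    ext y; simp [hA]
  have hncard : ({y : V | G.Adj x y ∧ 3 ≤ G.edist v y}).ncard = A.card := by
    rw [hset, Set.ncard_coe_finset]
  have hxA : x ∉ A := by simp [hA]
  set B : Finset V := insert x A with hB
  -- key sum inequality
  have hkey : (∑ w, (G'.edist v w : ℝ≥0∞)) + ((A.card : ℝ≥0∞) + 2)
      ≤ ∑ w, (G.edist v w : ℝ≥0∞) := by
    have hsplit : ∀ (f : V → ℝ≥0∞), ∑ w, f w = (f x + ∑ y ∈ A, f y) + ∑ w ∈ Bᶜ, f w := by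
      intro f
      rw [← Finset.sum_add_sum_compl B, hB, Finset.sum_insert hxA]
    rw [hsplit (fun w => (G'.edist v w : ℝ≥0∞)), hsplit (fun w => (G.edist v w : ℝ≥0∞))]
    have h1 : ((G'.edist v x : ℝ≥0∞)) + 2 ≤ (G.edist v x : ℝ≥0∞) := by
      rw [hd'x]
      calc ((1 : ℕ∞) : ℝ≥0∞) + 2 = ((3 : ℕ∞) : ℝ≥0∞) := by norm_cast
        _ ≤ _ := ENat.toENNReal_le.mpr hx
    have h2 : ∀ y ∈ A, ((G'.edist v y : ℝ≥0∞)) + 1 ≤ (G.edist v y : ℝ≥0∞) := by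
      intro y hy
      rw [hA, Finset.mem_filter] at hy
      calc ((G'.edist v y : ℝ≥0∞)) + 1 ≤ ((2 : ℕ∞) : ℝ≥0∞) + 1 := by
            gcongr
            exact hA2 y hy.2.1
        _ = ((3 : ℕ∞) : ℝ≥0∞) := by norm_cast
        _ ≤ _ := ENat.toENNReal_le.mpr hy.2.2
    have h3 : ∀ w ∈ Bᶜ, (G'.edist v w : ℝ≥0∞) ≤ (G.edist v w : ℝ≥0∞) :=
      fun w _ => ENat.toENNReal_le.mpr (SimpleGraph.edist_anti hle)
    calc ((G'.edist v x : ℝ≥0∞) + ∑ y ∈ A, (G'.edist v y : ℝ≥0∞)) + ∑ w ∈ Bᶜ, (G'.edist v w : ℝ≥0∞)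
          + ((A.card : ℝ≥0∞) + 2)
        = (((G'.edist v x : ℝ≥0∞) + 2) + ∑ y ∈ A, ((G'.edist v y : ℝ≥0∞) + 1))
          + ∑ w ∈ Bᶜ, (G'.edist v w : ℝ≥0∞) := by
          rw [Finset.sum_add_distrib, Finset.sum_const, nsmul_eq_mul, mul_one]
          ring
      _ ≤ ((G.edist v x : ℝ≥0∞) + ∑ y ∈ A, (G.edist v y : ℝ≥0∞)) + ∑ w ∈ Bᶜ, (G.edist v w : ℝ≥0∞) := by
          exact add_le_add (add_le_add h1 (Finset.sum_le_sum h2)) (Finset.sum_le_sum h3)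
  -- Nash inequality
  have hvT : v ∉ T := by
    rw [hT, Finset.mem_insert]
    push_neg
    exact ⟨hvx, hS v⟩
  have hnash := hNash v T hvT
  rw [netCost, netCost] at hnash
  have hcardT : (T.card : ℝ≥0∞) = (S v).card + 1 := by
    rw [hT, Finset.card_insert_of_notMem hxSv]
    push_cast; ring
  have hSv' : (Function.update S v T) v = T := Function.update_self v T S
  rw [hSv'] at hnash
  set Dsum : ℝ≥0∞ := ∑ w, (G'.edist v w : ℝ≥0∞) with hDsum
  have hDfin : Dsum ≠ ⊤ := by
    rw [hDsum]
    refine (ENNReal.sum_lt_top.2 fun w _ => ?_).ne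
    exact lt_top_iff_ne_top.2 (fun h => hfin w (by rwa [← ENat.toENNReal_top, ENat.toENNReal_inj] at h))
  have hC : ENNReal.ofReal α * (S v).card + Dsum ≠ ⊤ := by
    refine ENNReal.add_ne_top.mpr ⟨?_, hDfin⟩
    exact ENNReal.mul_ne_top ENNReal.ofReal_ne_top (ENNReal.natCast_ne_top _)
  have hfinal : ((A.card : ℝ≥0∞) + 2) ≤ ENNReal.ofReal α := by
    have hchain : (ENNReal.ofReal α * (S v).card + Dsum) + ((A.card : ℝ≥0∞) + 2)
        ≤ (ENNReal.ofReal α * (S v).card + Dsum) + ENNReal.ofReal α := by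
      calc (ENNReal.ofReal α * (S v).card + Dsum) + ((A.card : ℝ≥0∞) + 2)
          = ENNReal.ofReal α * (S v).card + (Dsum + ((A.card : ℝ≥0∞) + 2)) := by ring
        _ ≤ ENNReal.ofReal α * (S v).card + ∑ w, (G.edist v w : ℝ≥0∞) := by gcongr
        _ ≤ ENNReal.ofReal α * (T.card : ℝ≥0∞) + Dsum := hnash
        _ = (ENNReal.ofReal α * (S v).card + Dsum) + ENNReal.ofReal α := by
            rw [hcardT]; ring
    exact (ENNReal.add_le_add_iff_left hC).mp hchain
  -- convert to reals
  have hαpos : (0:ℝ) ≤ α := le_of_lt (lt_trans one_pos hα)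
  have : ((A.card : ℝ) + 2) ≤ α := by
    have := hfinal
    rw [show ((A.card : ℝ≥0∞) + 2) = ENNReal.ofReal ((A.card : ℝ) + 2) by
      rw [ENNReal.ofReal_add (by positivity) (by norm_num)]
      simp [ENNReal.ofReal_natCast]] at this
    exact (ENNReal.ofReal_le_ofReal_iff hαpos).mp this
  rw [hncard]
  linarith
end

section
/- For α ≥ 1, the star with all edges bought by the center is a Nash equilibrium of the network creation game on n ≥ 2 vertices: the center cannot profitably delete or change its edges (deletion disconnects the graph), and no leaf can profitably buy edges since each bought edge costs α ≥ 1 and decreases its distance sum by at most 1. -/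
open scoped ENNReal

lemma two_le_edist_of_not_adj {V : Type*} {G : SimpleGraph V} {u v : V}
    (hne : u ≠ v) (hadj : ¬ G.Adj u v) : 2 ≤ G.edist u v := by
  have h0 : 0 < G.edist u v := SimpleGraph.edist_pos_of_ne hne
  have h1 : G.edist u v ≠ 1 := fun h => hadj (SimpleGraph.edist_eq_one_iff_adj.mp h)
  have : 1 < G.edist u v := lt_of_le_of_ne (ENat.one_le_iff_ne_zero.mpr h0.ne') (Ne.symm h1)
  calc (2 : ℕ∞) = 1 + 1 := by norm_num
    _ ≤ G.edist u v := Order.add_one_le_of_lt this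

/-- For `α ≥ 1` and `n ≥ 2`, the star in which the center buys all the edges is a
Nash equilibrium. -/
theorem stmt17 {n : ℕ} (hn : 2 ≤ n) (α : ℝ) (hα : 1 ≤ α) (c : Fin n) :
    IsNash α (fun v => if v = c then Finset.univ \ {c} else (∅ : Finset (Fin n))) := by
  intro v T hvT
  set S : Fin n → Finset (Fin n) :=
    (fun v => if v = c then Finset.univ \ {c} else (∅ : Finset (Fin n))) with hSdef
  have hSc : S c = Finset.univ \ {c} := by simp [hSdef]
  have hSleaf : ∀ u, u ≠ c → S u = ∅ := fun u hu => by simp [hSdef, hu]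
  by_cases hv : v = c
  · subst hv
    by_cases hT : T = Finset.univ \ {v}
    · rw [show Function.update S v T = S by rw [hT, ← hSc]; exact Function.update_eq_self v S]
    · -- deviation disconnects: some vertex w ≠ v is missed
      have hsub : T ⊂ Finset.univ \ {v} := by
        refine Finset.ssubset_iff_subset_ne.mpr ⟨fun x hx => ?_, hT⟩
        simp only [Finset.mem_sdiff, Finset.mem_univ, Finset.mem_singleton, true_and]
        rintro rfl; exact hvT hx
      obtain ⟨w, hwU, hwT⟩ := Finset.exists_of_ssubset hsub
      simp only [Finset.mem_sdiff, Finset.mem_univ, Finset.mem_singleton, true_and] at hwU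
      set S' := Function.update S v T with hS'
      have hS'w : S' w = ∅ := by
        rw [hS', Function.update_of_ne hwU, hSleaf w hwU]
      have hiso : ∀ u, ¬ (netGraph S').Adj w u := by
        intro u hadj
        rcases hadj.2 with h | h
        · rw [hS'w] at h; exact absurd h (Finset.notMem_empty _)
        · by_cases huv : u = v
          · subst huv; rw [hS', Function.update_self] at h; exact hwT h
          · rw [hS', Function.update_of_ne huv, hSleaf u huv] at h
            exact absurd h (Finset.notMem_empty _)
      have hreach : ¬ (netGraph S').Reachable v w := by
        intro hr
        obtain ⟨p⟩ := hr.symm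
        cases p with
        | nil => exact hwU rfl
        | cons h _ => exact hiso _ h
      have htop : netCost α S' v = ⊤ := by
        rw [netCost]
        rw [ENNReal.add_eq_top]
        right
        rw [ENNReal.sum_eq_top]
        exact ⟨w, Finset.mem_univ w, by
          rw [SimpleGraph.edist_eq_top_of_not_reachable hreach]; rfl⟩
      rw [htop]; exact le_top
  · -- leaf case
    set S' := Function.update S v T with hS'
    set G := netGraph S with hG
    set G' := netGraph S' with hG'
    have hS'c : S' c = Finset.univ \ {c} := by
      rw [hS', Function.update_of_ne (Ne.symm hv), hSc]
    have hS'v : S' v = T := by rw [hS', Function.update_self]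
    have hS'leaf : ∀ u, u ≠ c → u ≠ v → S' u = ∅ := fun u h1 h2 => by
      rw [hS', Function.update_of_ne h2, hSleaf u h1]
    have hadjc : ∀ u, u ≠ c → G.Adj u c := by
      intro u hu
      exact ⟨hu, Or.inr (by rw [hSc]; simp [hu])⟩
    have hadjc' : G'.Adj v c :=
      ⟨hv, Or.inr (by rw [hS'c]; simp [hv])⟩
    -- pointwise distance comparison (in ℕ∞)
    have key : ∀ w : Fin n,
        G.edist v w ≤ (if w ∈ T then 1 else 0) + G'.edist v w := by
      intro w
      by_cases hwv : w = v
      · subst hwv; rw [SimpleGraph.edist_self]; exact zero_le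
      by_cases hwc : w = c
      · rw [hwc]
        rw [SimpleGraph.edist_eq_one_iff_adj.mpr (hadjc v hv)]
        have : (1 : ℕ∞) ≤ G'.edist v c := by
          have := SimpleGraph.edist_pos_of_ne (G := G') hv
          exact ENat.one_le_iff_ne_zero.mpr this.ne'
        exact le_trans this (le_add_self)
      · -- w ≠ v, w ≠ c : old distance ≤ 2
        have hle2 : G.edist v w ≤ 2 := by
          have h := SimpleGraph.edist_le
            (SimpleGraph.Walk.cons (hadjc v hv)
              (SimpleGraph.Walk.cons ((hadjc w hwc).symm) SimpleGraph.Walk.nil))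
          simpa using h
        by_cases hwT : w ∈ T
        · have h1 : (1 : ℕ∞) ≤ G'.edist v w :=
            ENat.one_le_iff_ne_zero.mpr
              (SimpleGraph.edist_pos_of_ne (G := G') (Ne.symm hwv)).ne'
          rw [if_pos hwT]
          calc G.edist v w ≤ 2 := hle2
            _ = 1 + 1 := by norm_num
            _ ≤ 1 + G'.edist v w := by exact add_le_add le_rfl h1
        · have hnadj : ¬ G'.Adj v w := by
            rintro ⟨hne, h | h⟩
            · rw [hS'v] at h; exact hwT h
            · rw [hS'leaf w hwc hwv] at h; exact absurd h (Finset.notMem_empty _)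
          have h2 : (2 : ℕ∞) ≤ G'.edist v w :=
            two_le_edist_of_not_adj (Ne.symm hwv) hnadj
          rw [if_neg hwT, zero_add]
          exact le_trans hle2 h2
    -- assemble
    have hone : (1 : ℝ≥0∞) ≤ ENNReal.ofReal α := by
      rw [← ENNReal.ofReal_one]; exact ENNReal.ofReal_le_ofReal hα
    have hcardT : ((T.card : ℝ≥0∞)) = ∑ w : Fin n, (if w ∈ T then (1 : ℝ≥0∞) else 0) := by
      rw [Finset.sum_ite_mem, Finset.univ_inter, Finset.sum_const, nsmul_eq_mul, mul_one]
    rw [netCost, netCost]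
    have hSv : S v = ∅ := hSleaf v hv
    rw [hSv]
    simp only [Finset.card_empty, Nat.cast_zero, mul_zero, zero_add]
    rw [hS'v]
    calc ∑ w, ((netGraph S).edist v w : ℝ≥0∞)
        ≤ ∑ w : Fin n, ((if w ∈ T then (1:ℝ≥0∞) else 0) + ((netGraph S').edist v w : ℝ≥0∞)) := by
          refine Finset.sum_le_sum fun w _ => ?_
          have := key w
          calc ((netGraph S).edist v w : ℝ≥0∞)
              ≤ (((if w ∈ T then 1 else 0) + G'.edist v w : ℕ∞) : ℝ≥0∞) :=
                ENat.toENNReal_le.mpr this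
            _ = (if w ∈ T then (1:ℝ≥0∞) else 0) + ((netGraph S').edist v w : ℝ≥0∞) := by
                rw [ENat.toENNReal_add]
                congr 1
                split <;> simp
      _ = (T.card : ℝ≥0∞) + ∑ w, ((netGraph S').edist v w : ℝ≥0∞) := by
          rw [Finset.sum_add_distrib, hcardT]
      _ ≤ ENNReal.ofReal α * (T.card : ℝ≥0∞) + ∑ w, ((netGraph S').edist v w : ℝ≥0∞) := by
          gcongr
          calc (T.card : ℝ≥0∞) = 1 * T.card := (one_mul _).symm
            _ ≤ ENNReal.ofReal α * T.card := by gcongr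
end
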